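/- arXiv:1509.02945 — 7 statements merged into one kernel-verified Lean document; each statement's English description precedes it below -/
import Mathlib

section
/- For every natural number n, the Koornwinder polynomial K_n admits the expansion K_n(s) = −Σ_{j=0}^{n−1} (2j+1)·L_j(s) + (n²+1)·L_n(s), as an identity of real polynomials. -/
open Polynomial

/-- The `n`-th Legendre polynomial (over `ℝ`), normalized so that `legendre n` evaluates
to `1` at `1`, defined via Rodrigues' formula. -/
noncomputable def legendre (n : ℕ) : Polynomial ℝ :=
  ((1 : ℝ) / (2 ^ n * n.factorial)) • derivative^[n] ((X ^ 2 - 1) ^ n)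

/-- The `n`-th Koornwinder polynomial `K_n(s) = -(1+s) L_n'(s) + (n² + n + 1) L_n(s)`. -/
noncomputable def koornwinder (n : ℕ) : Polynomial ℝ :=
  -(1 + X) * derivative (legendre n) + ((n : ℝ) ^ 2 + (n : ℝ) + 1) • legendre n

lemma iter_deriv_X_mul (n : ℕ) :
    ∀ g : Polynomial ℝ, derivative^[n + 1] (X * g)
      = X * derivative^[n + 1] g + C ((n : ℝ) + 1) * derivative^[n] g := by
  induction n with
  | zero =>
      intro g
      simp [derivative_mul]
      ring
  | succ n ih =>
      intro g
      rw [Function.iterate_succ_apply, derivative_mul, derivative_X, one_mul,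
        iterate_map_add, ih (derivative g), ← Function.iterate_succ_apply,
        ← Function.iterate_succ_apply]
      have : C ((n : ℝ) + 1 + 1) = C ((n : ℝ) + 1) + 1 := by
        rw [C_add, C_1]
      push_cast
      rw [this]
      ring

lemma const_rel (n : ℕ) :
    (1 : ℝ) / (2 ^ n * n.factorial)
      = (1 / (2 ^ (n + 1) * (n + 1).factorial)) * (2 * ((n : ℝ) + 1)) := by
  have h1 : ((n + 1).factorial : ℝ) = ((n : ℝ) + 1) * n.factorial := by
    rw [Nat.factorial_succ]; push_cast; ring
  have h2 : (n.factorial : ℝ) ≠ 0 := Nat.cast_ne_zero.mpr n.factorial_ne_zero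
  have h3 : ((n : ℝ) + 1) ≠ 0 := by positivity
  rw [h1]
  field_simp
  ring

lemma legendre_eq (n : ℕ) :
    legendre n = C ((1 : ℝ) / (2 ^ n * n.factorial)) * derivative^[n] ((X ^ 2 - 1) ^ n) := by
  rw [legendre, smul_eq_C_mul]

lemma deriv_legendre (n : ℕ) :
    derivative (legendre n)
      = C ((1 : ℝ) / (2 ^ n * n.factorial)) * derivative^[n + 1] ((X ^ 2 - 1) ^ n) := by
  rw [legendre, derivative_smul, Function.iterate_succ_apply', smul_eq_C_mul]

lemma key_f (n : ℕ) :
    derivative ((X ^ 2 - 1 : Polynomial ℝ) ^ (n + 1))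
      = C (2 * ((n : ℝ) + 1)) * (X * (X ^ 2 - 1) ^ n) := by
  have h2X : derivative (X ^ 2 - 1 : Polynomial ℝ) = C 2 * X := by
    simp [derivative_sub, derivative_pow]
  rw [derivative_pow, h2X]
  simp only [Nat.add_sub_cancel]
  have : C (2 * ((n : ℝ) + 1)) = C ((n : ℝ) + 1) * C 2 := by
    rw [← C_mul]; ring_nf
  rw [this]
  push_cast
  ring

lemma legendreA (n : ℕ) :
    derivative (legendre (n + 1))
      = X * derivative (legendre n) + C ((n : ℝ) + 1) * legendre n := by
  set a := derivative^[n + 1] ((X ^ 2 - 1 : Polynomial ℝ) ^ n) with ha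
  set b := derivative^[n] ((X ^ 2 - 1 : Polynomial ℝ) ^ n) with hb
  have h1 : derivative (legendre (n + 1))
      = C ((1 : ℝ) / (2 ^ (n + 1) * (n + 1).factorial))
        * derivative^[n + 1] (derivative ((X ^ 2 - 1) ^ (n + 1))) := by
    rw [deriv_legendre, Function.iterate_succ_apply]
  have h2 : derivative^[n + 1] (derivative ((X ^ 2 - 1 : Polynomial ℝ) ^ (n + 1)))
      = C (2 * ((n : ℝ) + 1)) * (X * a + C ((n : ℝ) + 1) * b) := by
    rw [key_f, ← smul_eq_C_mul, iterate_derivative_smul, iter_deriv_X_mul, smul_eq_C_mul]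
  have h3 : derivative (legendre n)
      = C ((1 : ℝ) / (2 ^ n * n.factorial)) * a := deriv_legendre n
  have h4 : legendre n = C ((1 : ℝ) / (2 ^ n * n.factorial)) * b := legendre_eq n
  have hc : C ((1 : ℝ) / (2 ^ n * n.factorial))
      = C ((1 : ℝ) / (2 ^ (n + 1) * (n + 1).factorial)) * C (2 * ((n : ℝ) + 1)) := by
    rw [← C_mul, const_rel]
  linear_combination h1 + C ((1 : ℝ) / (2 ^ (n + 1) * (n + 1).factorial)) * h2
    - X * h3 - C ((n : ℝ) + 1) * h4 - (X * a + C ((n : ℝ) + 1) * b) * hc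

lemma legendreC (n : ℕ) :
    X * derivative (legendre (n + 1))
      = C ((n : ℝ) + 1) * legendre (n + 1) + derivative (legendre n) := by
  set a := derivative^[n + 1] ((X ^ 2 - 1 : Polynomial ℝ) ^ n) with ha
  set v := derivative^[n + 1] ((X ^ 2 - 1 : Polynomial ℝ) ^ (n + 1)) with hv
  set u := derivative^[n + 1] (derivative ((X ^ 2 - 1 : Polynomial ℝ) ^ (n + 1))) with hu
  have h1 : derivative (legendre (n + 1))
      = C ((1 : ℝ) / (2 ^ (n + 1) * (n + 1).factorial)) * u := by
    rw [deriv_legendre, hu, Function.iterate_succ_apply]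
  have key : X * derivative ((X ^ 2 - 1 : Polynomial ℝ) ^ (n + 1))
      = C (2 * ((n : ℝ) + 1)) * ((X ^ 2 - 1) ^ (n + 1) + (X ^ 2 - 1) ^ n) := by
    rw [key_f]
    ring
  have hvv : v = derivative^[n] (derivative ((X ^ 2 - 1 : Polynomial ℝ) ^ (n + 1))) :=
    Function.iterate_succ_apply _ _ _
  have h5 : derivative^[n + 1] (X * derivative ((X ^ 2 - 1 : Polynomial ℝ) ^ (n + 1)))
      = X * u + C ((n : ℝ) + 1) * v := by
    rw [iter_deriv_X_mul, hvv]
  have h6 : derivative^[n + 1] (X * derivative ((X ^ 2 - 1 : Polynomial ℝ) ^ (n + 1)))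
      = C (2 * ((n : ℝ) + 1)) * (v + a) := by
    rw [key, ← smul_eq_C_mul, iterate_derivative_smul, iterate_map_add, smul_eq_C_mul]
  have h3 : derivative (legendre n)
      = C ((1 : ℝ) / (2 ^ n * n.factorial)) * a := deriv_legendre n
  have hL' : legendre (n + 1)
      = C ((1 : ℝ) / (2 ^ (n + 1) * (n + 1).factorial)) * v := legendre_eq (n + 1)
  have hc : C ((1 : ℝ) / (2 ^ n * n.factorial))
      = C ((1 : ℝ) / (2 ^ (n + 1) * (n + 1).factorial)) * C (2 * ((n : ℝ) + 1)) := by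
    rw [← C_mul, const_rel]
  have hck : C (2 * ((n : ℝ) + 1)) = 2 * C ((n : ℝ) + 1) := by
    rw [C_mul, map_ofNat]
  linear_combination X * h1 + C ((1 : ℝ) / (2 ^ (n + 1) * (n + 1).factorial)) * h6
    - C ((1 : ℝ) / (2 ^ (n + 1) * (n + 1).factorial)) * h5 - h3
    - C ((n : ℝ) + 1) * hL' - a * hc
    + C ((1 : ℝ) / (2 ^ (n + 1) * (n + 1).factorial)) * v * hck

lemma legendreE (n : ℕ) :
    (1 + X) * derivative (legendre n)
      = (∑ j ∈ Finset.range n, C (2 * (j : ℝ) + 1) * legendre j)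
        + C (n : ℝ) * legendre n := by
  induction n with
  | zero => simp [legendre]
  | succ n ih =>
      rw [Finset.sum_range_succ]
      have hA := legendreA n
      have hC := legendreC n
      have hcc : C ((n : ℝ) + 1) + C (n : ℝ) = C (2 * (n : ℝ) + 1) := by
        rw [← C_add]; ring_nf
      push_cast
      linear_combination hA + hC + ih + legendre n * hcc

/-- Expansion of the Koornwinder polynomial in Legendre polynomials:
`K_n = -∑_{j<n} (2j+1) L_j + (n²+1) L_n`. -/
theorem koornwinder_legendre_expansion (n : ℕ) :
    koornwinder n
      = -(∑ j ∈ Finset.range n, (2 * (j : ℝ) + 1) • legendre j)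
        + ((n : ℝ) ^ 2 + 1) • legendre n := by
  rw [koornwinder]
  simp only [smul_eq_C_mul]
  have hconst : C ((n : ℝ) ^ 2 + (n : ℝ) + 1) = C (n : ℝ) + C ((n : ℝ) ^ 2 + 1) := by
    rw [← C_add]; ring_nf
  linear_combination - legendreE n + legendre n * hconst
end

section
/- For all natural numbers m ≠ n, the Koornwinder polynomials are orthogonal with respect to the Lebesgue measure with a unit point mass adjoined at 1: (1/2)·∫_{−1}^{1} K_n(s)·K_m(s) ds + K_n(1)·K_m(1) = 0. -/
open Polynomial

namespace KoornAux

open MeasureTheory intervalIntegral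

noncomputable def Ig (p : Polynomial ℝ) : ℝ := ∫ s in (-1:ℝ)..1, p.eval s

lemma Ig_intble (p : Polynomial ℝ) : IntervalIntegrable (fun s => p.eval s) volume (-1:ℝ) 1 :=
  p.continuous.intervalIntegrable _ _

lemma Ig_add (p q : Polynomial ℝ) : Ig (p + q) = Ig p + Ig q := by
  unfold Ig
  simp only [eval_add]
  exact integral_add (Ig_intble p) (Ig_intble q)

lemma Ig_smul (c : ℝ) (p : Polynomial ℝ) : Ig (c • p) = c * Ig p := by
  unfold Ig
  simp only [eval_smul, smul_eq_mul]
  exact integral_const_mul c _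

lemma Ig_zero : Ig 0 = 0 := by simp [Ig]

lemma Ig_neg (p : Polynomial ℝ) : Ig (-p) = - Ig p := by
  have := Ig_smul (-1) p
  simpa using this

lemma Ig_sub (p q : Polynomial ℝ) : Ig (p - q) = Ig p - Ig q := by
  rw [sub_eq_add_neg, Ig_add, Ig_neg, sub_eq_add_neg]

lemma Ig_deriv (p : Polynomial ℝ) : Ig (derivative p) = p.eval 1 - p.eval (-1) := by
  unfold Ig
  have := integral_deriv_eq_sub (f := fun x => p.eval x) (a := (-1:ℝ)) (b := 1)
    (fun x _ => p.differentiableAt) ?_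
  · rw [← this]
    congr 1; ext x; rw [Polynomial.deriv]
  · rw [show (deriv fun x => eval x p) = fun s => (derivative p).eval s from
      funext fun x => Polynomial.deriv p]
    exact Ig_intble (derivative p)

lemma Ig_parts (p q : Polynomial ℝ) :
    Ig (p * derivative q) = p.eval 1 * q.eval 1 - p.eval (-1) * q.eval (-1)
      - Ig (derivative p * q) := by
  have h := Ig_deriv (p * q)
  rw [derivative_mul, Ig_add] at h
  simp only [eval_mul] at h ⊢
  linarith

lemma g_factored (n : ℕ) : ((X:ℝ[X])^2 - 1)^n = (X - C 1)^n * (X - C (-1))^n := by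
  rw [← mul_pow]; congr 1; ring_nf; simp [C_1]; ring

lemma eval_iterate_g_one (n k : ℕ) (hk : k < n) :
    (derivative^[k] (((X:ℝ[X])^2 - 1)^n)).eval 1 = 0 := by
  rw [g_factored, iterate_derivative_mul, eval_finset_sum]
  apply Finset.sum_eq_zero
  intro j hj
  rw [Finset.mem_range] at hj
  rw [eval_smul, iterate_derivative_X_sub_pow, eval_mul, eval_smul, eval_pow]
  have : (1:ℝ) - 1 = 0 := by ring
  simp only [eval_sub, eval_X, eval_C, this]
  rw [zero_pow (by omega)]
  simp

lemma eval_iterate_g_neg_one (n k : ℕ) (hk : k < n) :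
    (derivative^[k] (((X:ℝ[X])^2 - 1)^n)).eval (-1) = 0 := by
  rw [g_factored, iterate_derivative_mul, eval_finset_sum]
  apply Finset.sum_eq_zero
  intro j hj
  rw [Finset.mem_range] at hj
  rw [eval_smul, iterate_derivative_X_sub_pow (c := (-1:ℝ)), eval_mul, eval_smul, eval_pow]
  simp only [eval_sub, eval_X, eval_C, sub_neg_eq_add, neg_add_cancel]
  rw [zero_pow (by omega)]
  simp

lemma key_aux (n : ℕ) : ∀ k ≤ n, ∀ p : ℝ[X], derivative^[k] p = 0 →
    Ig (p * derivative^[k] (((X:ℝ[X])^2 - 1)^n)) = 0 := by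
  intro k
  induction k with
  | zero => intro _ p hp; simp only [Function.iterate_zero, id] at hp; simp [hp, Ig_zero]
  | succ k ih =>
    intro hkn p hp
    rw [Function.iterate_succ_apply']
    rw [Ig_parts p (derivative^[k] (((X:ℝ[X])^2 - 1)^n))]
    rw [eval_iterate_g_one n k (by omega), eval_iterate_g_neg_one n k (by omega)]
    rw [ih (by omega) (derivative p) (by rwa [← Function.iterate_succ_apply])]
    ring

lemma key (n : ℕ) (p : ℝ[X]) (hp : derivative^[n] p = 0) : Ig (p * legendre n) = 0 := by
  unfold legendre
  rw [mul_smul_comm, Ig_smul, key_aux n n le_rfl p hp, mul_zero]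

lemma eval_iterate_g_self (n : ℕ) :
    (derivative^[n] (((X:ℝ[X])^2 - 1)^n)).eval 1 = (n.factorial : ℝ) * 2 ^ n := by
  rw [g_factored, iterate_derivative_mul, eval_finset_sum]
  rw [Finset.sum_eq_single 0]
  · simp only [Nat.choose_zero_right, one_smul, Nat.sub_zero, Function.iterate_zero, id,
      eval_mul, iterate_derivative_X_sub_pow_self]
    simp [eval_pow]
    left; norm_num
  · intro j hj hj0
    rw [eval_smul, iterate_derivative_X_sub_pow, eval_mul, eval_smul, eval_pow]
    rw [Finset.mem_range] at hj
    have h1 : n - (n - j) = j := by omega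
    simp only [eval_sub, eval_X, eval_C, sub_self, h1, zero_pow hj0]
    simp
  · intro h; simp at h

lemma legendre_eval_one (n : ℕ) : (legendre n).eval 1 = 1 := by
  rw [legendre, eval_smul, eval_iterate_g_self, smul_eq_mul]
  have h2 : (2:ℝ)^n ≠ 0 := by positivity
  have hf : (n.factorial : ℝ) ≠ 0 := Nat.cast_ne_zero.2 n.factorial_ne_zero
  field_simp

lemma eval_iterate_g_succ (n : ℕ) :
    (derivative^[n+1] (((X:ℝ[X])^2 - 1)^n)).eval 1
      = (n+1) * (n.factorial : ℝ) * n * 2 ^ (n-1) := by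
  rw [g_factored, iterate_derivative_mul, eval_finset_sum]
  rw [Finset.sum_eq_single 1]
  · simp only [Nat.choose_one_right, Nat.add_sub_cancel, iterate_derivative_X_sub_pow_self,
      Function.iterate_one]
    rw [derivative_X_sub_C_pow, eval_smul, eval_mul, eval_mul, eval_C]
    simp only [eval_pow, eval_sub, eval_X, eval_C, sub_neg_eq_add, nsmul_eq_mul,
      iterate_derivative_X_sub_pow_self, eval_natCast, eval_mul]
    norm_num
    ring
  · intro j hj hj1
    rw [Finset.mem_range] at hj
    rw [eval_smul, iterate_derivative_X_sub_pow, eval_mul, eval_smul, eval_pow]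
    rcases Nat.eq_zero_or_pos j with rfl | hjpos
    · have : n.descFactorial (n + 1 - 0) = 0 :=
        Nat.descFactorial_eq_zero_iff_lt.2 (by omega)
      simp [this]
    · have h1 : n - (n + 1 - j) = j - 1 := by omega
      simp only [eval_sub, eval_X, eval_C, sub_self, h1, zero_pow (by omega : j - 1 ≠ 0)]
      simp
  · intro h; exact absurd (Finset.mem_range.2 (by omega)) h

lemma derivative_legendre_eval_one (n : ℕ) :
    (derivative (legendre n)).eval 1 = n * (n+1) / 2 := by
  rw [legendre, derivative_smul, ← Function.iterate_succ_apply' derivative, eval_smul,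
    eval_iterate_g_succ, smul_eq_mul]
  rcases Nat.eq_zero_or_pos n with rfl | hn
  · norm_num
  · have h2 : (2:ℝ)^n ≠ 0 := by positivity
    have hf : (n.factorial : ℝ) ≠ 0 := Nat.cast_ne_zero.2 n.factorial_ne_zero
    have hpow : (2:ℝ)^n = 2 * 2^(n-1) := by
      rw [← pow_succ']; congr 1; omega
    rw [hpow]
    field_simp

lemma koornwinder_eval_one (n : ℕ) : (koornwinder n).eval 1 = 1 := by
  rw [koornwinder, eval_add, eval_mul, eval_smul, derivative_legendre_eval_one,
    legendre_eval_one]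
  simp only [eval_neg, eval_add, eval_one, eval_X, smul_eq_mul]
  ring

lemma natDegree_legendre_le (n : ℕ) : (legendre n).natDegree ≤ n := by
  rw [legendre]
  refine (natDegree_smul_le _ _).trans ?_
  refine (natDegree_iterate_derivative _ _).trans ?_
  have h2 : ((X:ℝ[X])^2 - 1).natDegree ≤ 2 := by
    refine (natDegree_sub_le _ _).trans ?_
    simp [natDegree_X_pow]
  have h1 : (((X:ℝ[X])^2 - 1)^n).natDegree ≤ 2 * n := by
    refine natDegree_pow_le.trans ?_
    have := Nat.mul_le_mul_left n h2
    omega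
  omega

lemma nd_mul {p q : ℝ[X]} {a b : ℕ} (hp : p.natDegree ≤ a) (hq : q.natDegree ≤ b) :
    (p * q).natDegree ≤ a + b :=
  natDegree_mul_le.trans (add_le_add hp hq)

lemma nd_one_add_X : ((1 + X : ℝ[X])).natDegree ≤ 1 := by
  refine (natDegree_add_le _ _).trans ?_
  simp

lemma nd_one_sub_X2 : ((1 - X^2 : ℝ[X])).natDegree ≤ 2 := by
  refine (natDegree_sub_le _ _).trans ?_
  simp [natDegree_X_pow]

lemma iter_deriv_shift (p : ℝ[X]) (k : ℕ) :
    derivative^[k] (derivative p) = derivative^[k+1] p := by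
  rw [← Function.iterate_succ_apply]

-- (1+X) * p' = derivative ((1+X)*p) - p
lemma one_add_X_mul_deriv (p : ℝ[X]) :
    (1 + X) * derivative p = derivative ((1 + X) * p) - p := by
  rw [derivative_mul]
  simp only [derivative_add, derivative_one, derivative_X, zero_add, one_mul]
  ring

-- (1-X^2) * p' = derivative ((1-X^2)*p) + (2*X)*p
lemma one_sub_X2_mul_deriv (p : ℝ[X]) :
    (1 - X^2) * derivative p = derivative ((1 - X^2) * p) - ((-2)*X) * p := by
  rw [derivative_mul]
  simp only [derivative_sub, derivative_one, derivative_X_pow, zero_sub]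
  simp only [Nat.cast_ofNat, map_ofNat]
  ring

lemma vanish_main {m n : ℕ} (h : m < n) (k : ℕ) (hk : n ≤ k) :
    derivative^[k] (legendre m) = 0 :=
  iterate_derivative_eq_zero (lt_of_le_of_lt (natDegree_legendre_le m) (lt_of_lt_of_le h hk))

lemma vanish_one_add_X_Lm {m n : ℕ} (h : m < n) (k : ℕ) (hk : n + 1 ≤ k) :
    derivative^[k] ((1 + X) * legendre m) = 0 := by
  refine iterate_derivative_eq_zero ?_
  have := nd_mul nd_one_add_X (natDegree_legendre_le m)
  omega

lemma vanish_one_add_X_DLm {m n : ℕ} (h : m < n) (k : ℕ) (hk : n ≤ k) :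
    derivative^[k] ((1 + X) * derivative (legendre m)) = 0 := by
  rw [one_add_X_mul_deriv, iterate_derivative_sub, iter_deriv_shift,
    vanish_one_add_X_Lm h (k+1) (by omega), vanish_main h k hk, sub_zero]

lemma vanish_one_sub_X2_DLm {m n : ℕ} (h : m < n) :
    derivative^[n+1] ((1 - X^2) * derivative (legendre m)) = 0 := by
  rw [one_sub_X2_mul_deriv, iterate_derivative_sub, iter_deriv_shift]
  have h1 : derivative^[n+1+1] ((1 - X^2) * legendre m) = 0 := by
    refine iterate_derivative_eq_zero ?_
    have := nd_mul nd_one_sub_X2 (natDegree_legendre_le m)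
    omega
  have h2 : derivative^[n+1] (((-2)*X) * legendre m) = 0 := by
    refine iterate_derivative_eq_zero ?_
    have hx : (((-2)*X:ℝ[X])).natDegree ≤ 1 := by
      refine natDegree_mul_le.trans ?_
      simp
    have := nd_mul hx (natDegree_legendre_le m)
    omega
  rw [h1, h2, sub_zero]

lemma koorn_int {m n : ℕ} (h : m < n) : Ig (koornwinder n * koornwinder m) = -2 := by
  have hLn1 := legendre_eval_one n
  have hLm1 := legendre_eval_one m
  have hDLm1 := derivative_legendre_eval_one m
  have e1 : Ig (legendre m * legendre n) = 0 := key n _ (vanish_main h n le_rfl)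
  have e2 : Ig (((1+X) * derivative (legendre m)) * legendre n) = 0 :=
    key n _ (vanish_one_add_X_DLm h n le_rfl)
  have e3 : Ig (((1+X) * legendre m) * derivative (legendre n)) = 2 := by
    rw [Ig_parts]
    rw [key n _ (by rw [iter_deriv_shift]; exact vanish_one_add_X_Lm h (n+1) le_rfl)]
    simp only [eval_mul, eval_add, eval_one, eval_X, hLm1, hLn1]
    norm_num
  have e4 : Ig (((1+X) * derivative (legendre m)) * derivative (legendre n))
      = m*(m+1) := by
    rw [Ig_parts]
    rw [key n _ (by rw [iter_deriv_shift]; exact vanish_one_add_X_DLm h (n+1) (by omega))]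
    simp only [eval_mul, eval_add, eval_one, eval_X, hDLm1, hLn1]
    norm_num
    ring
  have e5 : Ig (((1 - X^2) * derivative (legendre m)) * derivative (legendre n)) = 0 := by
    rw [Ig_parts]
    rw [key n _ (by rw [iter_deriv_shift]; exact vanish_one_sub_X2_DLm h)]
    norm_num
  have expand : koornwinder n * koornwinder m =
      (2:ℝ) • (((1+X) * derivative (legendre m)) * derivative (legendre n))
      - ((1 - X^2) * derivative (legendre m)) * derivative (legendre n)
      - ((m:ℝ)^2 + (m:ℝ) + 1) • (((1+X) * legendre m) * derivative (legendre n))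
      - ((n:ℝ)^2 + (n:ℝ) + 1) • (((1+X) * derivative (legendre m)) * legendre n)
      + ((((n:ℝ)^2 + (n:ℝ) + 1) * ((m:ℝ)^2 + (m:ℝ) + 1)) • (legendre m * legendre n)) := by
    rw [koornwinder, koornwinder]
    simp only [smul_eq_C_mul, map_mul, map_ofNat, map_add, map_one, map_pow]
    ring
  rw [expand, Ig_add, Ig_sub, Ig_sub, Ig_sub, Ig_smul, Ig_smul, Ig_smul, Ig_smul,
    e1, e2, e3, e4, e5]
  ring

end KoornAux

open MeasureTheory intervalIntegral in
/-- Orthogonality of the Koornwinder polynomials with respect to the inner product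
`(1/2)∫_{-1}^1 f g ds + f(1) g(1)` (Lebesgue measure with a unit point mass at `1`). -/
theorem koornwinder_orthogonal {m n : ℕ} (hmn : m ≠ n) :
    (1 / 2) * (∫ s in (-1 : ℝ)..1, (koornwinder n).eval s * (koornwinder m).eval s)
      + (koornwinder n).eval 1 * (koornwinder m).eval 1 = 0 := by
  have hI : (∫ s in (-1:ℝ)..1, (koornwinder n).eval s * (koornwinder m).eval s)
      = KoornAux.Ig (koornwinder n * koornwinder m) := by
    unfold KoornAux.Ig
    congr 1
    ext s
    rw [eval_mul]
  have hval : KoornAux.Ig (koornwinder n * koornwinder m) = -2 := by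
    rcases lt_or_gt_of_ne hmn with hlt | hgt
    · exact KoornAux.koorn_int hlt
    · rw [mul_comm]
      exact KoornAux.koorn_int hgt
  rw [hI, hval, KoornAux.koornwinder_eval_one, KoornAux.koornwinder_eval_one]
  norm_num
end

section
/- The linear span of the family {(K_n, K_n(1)) : n ∈ ℕ}, where K_n is regarded as an element of L²([−1,1]; ℝ), is dense in the product space L²([−1,1]; ℝ) × ℝ. Consequently, after normalization, this family forms a Hilbert basis of L²([−1,1]; ℝ) × ℝ equipped with the inner product ⟨(f,a),(g,b)⟩ := (1/2)·∫_{−1}^{1} f(s)·g(s) ds + a·b. -/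
open Polynomial Topology Filter

lemma base_monic' : ((X:ℝ[X]) ^ 2 - 1).Monic := by monicity!

lemma base_monic (n : ℕ) : (((X:ℝ[X]) ^ 2 - 1) ^ n).Monic := base_monic'.pow _

lemma base_natDegree (n : ℕ) : (((X:ℝ[X]) ^ 2 - 1) ^ n).natDegree = 2 * n := by
  have h : ((X:ℝ[X]) ^ 2 - 1).natDegree = 2 := by
    compute_degree!
  rw [base_monic'.natDegree_pow, h]; ring

lemma legendre_coeff_ne (n : ℕ) : (legendre n).coeff n ≠ 0 := by
  have hc : (0:ℝ) < ((n + n).descFactorial n : ℝ) := by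
    have := Nat.descFactorial_eq_zero_iff_lt (n := n + n) (k := n)
    have h2 : (n+n).descFactorial n ≠ 0 := by
      intro h; have := this.1 h; omega
    positivity
  have hb : (((X:ℝ[X]) ^ 2 - 1) ^ n).coeff (n + n) = 1 := by
    have := (base_monic n).coeff_natDegree
    rwa [base_natDegree, two_mul] at this
  have h1 : (derivative^[n] (((X:ℝ[X]) ^ 2 - 1) ^ n)).coeff n
      = ((n + n).descFactorial n : ℝ) := by
    rw [Polynomial.coeff_iterate_derivative, hb, nsmul_eq_mul, mul_one]
  rw [legendre, Polynomial.coeff_smul, h1, smul_eq_mul]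
  have h2 : (0:ℝ) < 2 ^ n * n.factorial := by positivity
  positivity

lemma legendre_natDegree (n : ℕ) : (legendre n).natDegree = n := by
  apply le_antisymm
  · refine le_trans (Polynomial.natDegree_smul_le _ _) ?_
    refine le_trans (Polynomial.natDegree_iterate_derivative _ _) ?_
    rw [base_natDegree]; omega
  · exact Polynomial.le_natDegree_of_ne_zero (legendre_coeff_ne n)

lemma koornwinder_zero : koornwinder 0 = 1 := by
  have h : legendre 0 = 1 := by
    simp [legendre]
  rw [koornwinder, h]
  simp

lemma koornwinder_coeff_ne (n : ℕ) : (koornwinder n).coeff n ≠ 0 := by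
  cases n with
  | zero => rw [koornwinder_zero]; simp
  | succ m =>
    set n := m + 1
    have hL : (legendre n).natDegree = n := legendre_natDegree n
    have hd1 : (derivative (legendre n)).coeff n = 0 := by
      rw [Polynomial.coeff_derivative]
      rw [Polynomial.coeff_eq_zero_of_natDegree_lt (by omega : (legendre n).natDegree < n + 1)]
      ring
    have hd2 : (derivative (legendre n)).coeff m = (legendre n).coeff n * n := by
      rw [Polynomial.coeff_derivative]
      norm_cast
    have hmul : ((1 + X) * derivative (legendre n)).coeff n
        = (legendre n).coeff n * n := by
      rw [add_mul, one_mul, Polynomial.coeff_add, hd1,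
        Polynomial.coeff_X_mul, hd2, zero_add]
    rw [koornwinder, Polynomial.coeff_add, Polynomial.coeff_smul, neg_mul,
      Polynomial.coeff_neg, hmul, smul_eq_mul]
    have hne := legendre_coeff_ne n
    have : -((legendre n).coeff n * n) + ((n:ℝ)^2 + n + 1) * (legendre n).coeff n
        = ((n:ℝ)^2 + 1) * (legendre n).coeff n := by ring
    rw [this]
    have hpos : (0:ℝ) < (n:ℝ)^2 + 1 := by positivity
    exact mul_ne_zero hpos.ne' hne

lemma koornwinder_natDegree (n : ℕ) : (koornwinder n).natDegree = n := by
  apply le_antisymm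
  · cases n with
    | zero => rw [koornwinder_zero]; simp
    | succ m =>
      set n := m + 1
      refine le_trans (Polynomial.natDegree_add_le _ _) (max_le ?_ ?_)
      · rw [neg_mul, Polynomial.natDegree_neg]
        refine le_trans (Polynomial.natDegree_mul_le) ?_
        have h1 : ((1:ℝ[X]) + X).natDegree ≤ 1 := by compute_degree
        have h2 : (derivative (legendre n)).natDegree ≤ n - 1 := by
          refine le_trans (Polynomial.natDegree_derivative_le _) ?_
          rw [legendre_natDegree]
        omega
      · refine le_trans (Polynomial.natDegree_smul_le _ _) ?_
        rw [legendre_natDegree]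
  · exact Polynomial.le_natDegree_of_ne_zero (koornwinder_coeff_ne n)

lemma koornwinder_ne_zero (n : ℕ) : koornwinder n ≠ 0 := fun h => by
  have := koornwinder_coeff_ne n; rw [h] at this; simp at this

lemma mem_span_koornwinder (p : ℝ[X]) :
    p ∈ Submodule.span ℝ (Set.range koornwinder) := by
  have key : ∀ N : ℕ, ∀ q : ℝ[X], q.natDegree < N →
      q ∈ Submodule.span ℝ (Set.range koornwinder) := by
    intro N
    induction N with
    | zero => intro q h; exact absurd h (Nat.not_lt_zero _)
    | succ N ih =>
      intro q h
      by_cases hq : q = 0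
      · simp [hq]
      have hK := koornwinder_ne_zero q.natDegree
      set d := q.natDegree with hd
      set c := q.leadingCoeff / (koornwinder d).leadingCoeff with hc
      have hcne : c ≠ 0 :=
        div_ne_zero (Polynomial.leadingCoeff_ne_zero.mpr hq)
          (Polynomial.leadingCoeff_ne_zero.mpr hK)
      have hmem : C c * koornwinder d ∈ Submodule.span ℝ (Set.range koornwinder) := by
        have : koornwinder d ∈ Submodule.span ℝ (Set.range koornwinder) :=
          Submodule.subset_span ⟨d, rfl⟩
        simpa [Polynomial.smul_eq_C_mul] using Submodule.smul_mem _ c this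
      have hdeg : q.degree = (C c * koornwinder d).degree := by
        rw [Polynomial.degree_C_mul hcne, Polynomial.degree_eq_natDegree hq,
          Polynomial.degree_eq_natDegree hK, koornwinder_natDegree]
      have hlc : q.leadingCoeff = (C c * koornwinder d).leadingCoeff := by
        rw [Polynomial.leadingCoeff_mul, Polynomial.leadingCoeff_C, hc,
          div_mul_cancel₀ _ (Polynomial.leadingCoeff_ne_zero.mpr hK)]
      have hsub := Polynomial.degree_sub_lt hdeg hq hlc
      have hmem2 : q - C c * koornwinder d ∈ Submodule.span ℝ (Set.range koornwinder) := by
        by_cases h0 : q - C c * koornwinder d = 0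
        · simp [h0]
        · refine ih _ ?_
          have := Polynomial.natDegree_lt_natDegree h0 hsub
          omega
      have := Submodule.add_mem _ hmem2 hmem
      simpa using this
  exact key (p.natDegree + 1) p (Nat.lt_succ_self _)

open MeasureTheory

/-- Lebesgue measure restricted to `[-1,1]`. -/
noncomputable def mu01 : Measure ℝ := volume.restrict (Set.Icc (-1 : ℝ) 1)

/-- Polynomials (in particular Koornwinder polynomials) belong to `L²([-1,1])`. -/
theorem koornwinder_memLp (n : ℕ) :
    MemLp (fun s => (koornwinder n).eval s) 2 mu01 := by
  haveI : IsFiniteMeasure mu01 := by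
    constructor
    rw [mu01, Measure.restrict_apply_univ, Real.volume_Icc]
    exact ENNReal.ofReal_lt_top
  obtain ⟨C, hC⟩ := (isCompact_Icc (a := (-1:ℝ)) (b := 1)).exists_bound_of_continuousOn
    ((koornwinder n).continuous_aeval.continuousOn)
  exact MemLp.of_bound ((koornwinder n).continuous_aeval).aestronglyMeasurable C
    ((ae_restrict_iff' measurableSet_Icc).mpr (ae_of_all _ fun x hx => hC x hx))

/-- The pair `(K_n, K_n(1))` viewed as an element of `L²([-1,1]) × ℝ`. -/
noncomputable def koornwinderPair (n : ℕ) : Lp ℝ 2 mu01 × ℝ :=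
  ((koornwinder_memLp n).toLp _, (koornwinder n).eval 1)

lemma poly_memLp (p : ℝ[X]) : MemLp (fun s => p.eval s) 2 mu01 := by
  haveI : IsFiniteMeasure mu01 := by
    constructor
    rw [mu01, Measure.restrict_apply_univ, Real.volume_Icc]
    exact ENNReal.ofReal_lt_top
  obtain ⟨C, hC⟩ := (isCompact_Icc (a := (-1:ℝ)) (b := 1)).exists_bound_of_continuousOn
    (p.continuous_aeval.continuousOn)
  exact MemLp.of_bound (p.continuous_aeval).aestronglyMeasurable C
    ((ae_restrict_iff' measurableSet_Icc).mpr (ae_of_all _ fun x hx => hC x hx))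

noncomputable def polyPair : ℝ[X] →ₗ[ℝ] (Lp ℝ 2 mu01 × ℝ) :=
  LinearMap.prod
    { toFun := fun p => (poly_memLp p).toLp _
      map_add' := fun p q => by
        rw [← MemLp.toLp_add (poly_memLp p) (poly_memLp q)]
        exact MemLp.toLp_congr _ _ (Filter.EventuallyEq.of_eq (funext fun s => by simp))
      map_smul' := fun c p => by
        simp only [RingHom.id_apply]
        rw [← MemLp.toLp_const_smul c (poly_memLp p)]
        exact MemLp.toLp_congr (poly_memLp _) ((poly_memLp p).const_smul c)
          (Filter.EventuallyEq.of_eq (funext fun s => by simp)) }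
    (leval 1)

lemma polyPair_apply (p : ℝ[X]) :
    polyPair p = ((poly_memLp p).toLp _, p.eval 1) := rfl

lemma pair_mem_span (p : ℝ[X]) :
    polyPair p ∈ Submodule.span ℝ (Set.range koornwinderPair) := by
  have h0 : koornwinderPair = fun n => polyPair (koornwinder n) := rfl
  have h1 : Set.range koornwinderPair = polyPair '' Set.range koornwinder := by
    rw [h0]; exact Set.range_comp polyPair koornwinder
  rw [h1, Submodule.span_image]
  exact Submodule.mem_map_of_mem (mem_span_koornwinder p)

/-- The linear span of the family `{(K_n, K_n(1)) : n ∈ ℕ}` is dense in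
`L²([-1,1]; ℝ) × ℝ`; consequently, after normalization, this family forms a Hilbert basis
of this space for the inner product `⟨(f,a),(g,b)⟩ = (1/2)∫_{-1}^1 f g + a b`, whose norm is
equivalent to the product norm. -/
theorem koornwinderPair_span_dense :
    Dense ((Submodule.span ℝ (Set.range koornwinderPair) :
      Submodule ℝ (Lp ℝ 2 mu01 × ℝ)) : Set (Lp ℝ 2 mu01 × ℝ)) := by
  haveI : Fact ((1:ENNReal) ≤ 2) := ⟨by norm_num⟩
  haveI : IsFiniteMeasure mu01 := by
    constructor
    rw [mu01, Measure.restrict_apply_univ, Real.volume_Icc]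
    exact ENNReal.ofReal_lt_top
  set M := Submodule.span ℝ (Set.range koornwinderPair) with hM
  set N := M.topologicalClosure with hN
  have hsub : ∀ p : ℝ[X], polyPair p ∈ N := fun p =>
    M.le_topologicalClosure (pair_mem_span p)
  have hres : mu01 = volume.restrict (Set.Icc (-1 : ℝ) 1) := rfl
  have h01 : (((0 : Lp ℝ 2 mu01), (1:ℝ)) : Lp ℝ 2 mu01 × ℝ) ∈ N := by
    set q : ℕ → ℝ[X] := fun k => (C (1/2:ℝ) * (1 + X))^k with hq
    have hevalx : ∀ (k : ℕ) (x : ℝ), (q k).eval x = ((1+x)/2)^k := by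
      intro k x
      simp [hq]
      ring_nf
    have heval1 : ∀ k, (q k).eval 1 = 1 := by
      intro k; rw [hevalx]; norm_num
    have hbound : ∀ (k : ℕ), ∀ x ∈ Set.Icc (-1:ℝ) 1, |(q k).eval x| ≤ 1 := by
      intro k x hx
      rw [hevalx, abs_pow]
      apply pow_le_one₀ (abs_nonneg _)
      rw [abs_le]
      constructor
      · linarith [hx.1]
      · linarith [hx.2]
    have hF : Filter.Tendsto (fun k => ∫⁻ x, (‖(q k).eval x‖₊ : ENNReal)^(2:ℝ) ∂mu01)
        Filter.atTop (𝓝 0) := by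
      have h0 : (𝓝 (0:ENNReal)) = 𝓝 (∫⁻ (_x:ℝ), 0 ∂mu01) := by simp
      rw [h0]
      refine tendsto_lintegral_of_dominated_convergence (fun _ => 1)
        (fun k => ?_) (fun k => ?_) ?_ ?_
      · exact (((q k).continuous_aeval.measurable.nnnorm).coe_nnreal_ennreal).pow_const _
      · rw [hres]
        refine (ae_restrict_iff' measurableSet_Icc).2 (ae_of_all _ fun x hx => ?_)
        have h1 : ‖(q k).eval x‖₊ ≤ 1 := by
          rw [← NNReal.coe_le_coe, coe_nnnorm, Real.norm_eq_abs, NNReal.coe_one]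
          exact hbound k x hx
        exact ENNReal.rpow_le_one (by exact_mod_cast h1) (by norm_num)
      · simp [lintegral_one, measure_ne_top]
      · have hmu1 : mu01 {(1:ℝ)} = 0 := by
          rw [hres, Measure.restrict_apply (measurableSet_singleton 1)]
          exact measure_mono_null Set.inter_subset_left Real.volume_singleton
        have hne1 : ∀ᵐ x ∂mu01, x ≠ 1 := by
          rw [ae_iff]
          simpa using hmu1
        have hIcc_ae : ∀ᵐ x ∂mu01, x ∈ Set.Icc (-1:ℝ) 1 := by
          rw [hres]
          exact (ae_restrict_iff' measurableSet_Icc).2 (ae_of_all _ fun x hx => hx)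
        filter_upwards [hne1, hIcc_ae] with x hx1 hx2
        have habs : |(1+x)/2| < 1 := by
          rw [abs_lt]
          constructor
          · linarith [hx2.1]
          · have : x < 1 := lt_of_le_of_ne hx2.2 hx1
            linarith
        have hpow := tendsto_pow_atTop_nhds_zero_of_abs_lt_one habs
        have hcont : Continuous fun r : ℝ => ((‖r‖₊ : ENNReal))^(2:ℝ) :=
          ENNReal.continuous_rpow_const.comp (ENNReal.continuous_coe.comp continuous_nnnorm)
        have h2 := (hcont.tendsto 0).comp hpow
        have h00 : ((‖(0:ℝ)‖₊ : ENNReal))^(2:ℝ) = 0 := by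
          simp [ENNReal.zero_rpow_of_pos]
        rw [h00] at h2
        have hfk : (fun k => (‖(q k).eval x‖₊ : ENNReal)^(2:ℝ))
            = (fun r : ℝ => ((‖r‖₊ : ENNReal))^(2:ℝ)) ∘ fun k => ((1+x)/2)^k := by
          funext k
          simp only [Function.comp_apply, hevalx]
        rw [hfk]
        exact h2
    have hsn : Filter.Tendsto (fun k => eLpNorm (fun s => (q k).eval s) 2 mu01)
        Filter.atTop (𝓝 0) := by
      have hrw : ∀ k, eLpNorm (fun s => (q k).eval s) 2 mu01
          = (∫⁻ x, (‖(q k).eval x‖₊ : ENNReal)^(2:ℝ) ∂mu01) ^ (1/(2:ℝ)) := by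
        intro k
        rw [eLpNorm_eq_lintegral_rpow_enorm_toReal (by norm_num) (by norm_num)]
        norm_num [enorm_eq_nnnorm]
      simp only [hrw]
      have hcont2 : Continuous fun y : ENNReal => y ^ (1/(2:ℝ)) :=
        ENNReal.continuous_rpow_const
      have h3 := (hcont2.tendsto 0).comp hF
      simpa [ENNReal.zero_rpow_of_pos, Function.comp_def] using h3
    have hnorm : Filter.Tendsto
        (fun k => ‖((poly_memLp (q k)).toLp _ : Lp ℝ 2 mu01)‖) Filter.atTop (𝓝 0) := by
      simp only [Lp.norm_toLp]
      have h4 := (ENNReal.tendsto_toReal (ENNReal.zero_ne_top)).comp hsn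
      simpa [Function.comp_def] using h4
    have hlim1 : Filter.Tendsto (fun k => ((poly_memLp (q k)).toLp _ : Lp ℝ 2 mu01))
        Filter.atTop (𝓝 0) := tendsto_zero_iff_norm_tendsto_zero.2 hnorm
    have hlim : Filter.Tendsto (fun k => polyPair (q k)) Filter.atTop
        (𝓝 (((0 : Lp ℝ 2 mu01), (1:ℝ)) : Lp ℝ 2 mu01 × ℝ)) := by
      have hfun : (fun k => polyPair (q k))
          = fun k => ((((poly_memLp (q k)).toLp _ : Lp ℝ 2 mu01)), (1:ℝ)) := by
        funext k
        rw [polyPair_apply, heval1]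
      rw [hfun]
      exact hlim1.prodMk_nhds tendsto_const_nhds
    exact (Submodule.isClosed_topologicalClosure M).mem_of_tendsto hlim
      (Filter.Eventually.of_forall fun k => hsub (q k))
  have hall0 : ∀ f : Lp ℝ 2 mu01, ((f, (0:ℝ)) : Lp ℝ 2 mu01 × ℝ) ∈ N := by
    have hS0closed : IsClosed {f : Lp ℝ 2 mu01 | ((f, (0:ℝ)) : Lp ℝ 2 mu01 × ℝ) ∈ N} := by
      have hc : Continuous fun f : Lp ℝ 2 mu01 => ((f, (0:ℝ)) : Lp ℝ 2 mu01 × ℝ) :=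
        continuous_id.prodMk continuous_const
      exact IsClosed.preimage hc (Submodule.isClosed_topologicalClosure M)
    have hpoly0 : ∀ p : ℝ[X], ((((poly_memLp p).toLp _ : Lp ℝ 2 mu01), (0:ℝ)) :
        Lp ℝ 2 mu01 × ℝ) ∈ N := by
      intro p
      have h1 := hsub p
      rw [polyPair_apply] at h1
      have h2 : (((0 : Lp ℝ 2 mu01), p.eval 1) : Lp ℝ 2 mu01 × ℝ) ∈ N := by
        have h3 := N.smul_mem (p.eval 1) h01
        simpa using h3
      have h4 := N.sub_mem h1 h2
      simpa using h4
    haveI : mu01.WeaklyRegular :=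
      Measure.WeaklyRegular.restrict_of_measure_ne_top
        (by rw [Real.volume_Icc]; exact ENNReal.ofReal_ne_top)
    have hdr := BoundedContinuousFunction.toLp_denseRange ℝ mu01 ℝ
      (by norm_num : (2:ENNReal) ≠ ⊤)
    have hkey : ∀ g : BoundedContinuousFunction ℝ ℝ,
        (((BoundedContinuousFunction.toLp 2 mu01 ℝ g : Lp ℝ 2 mu01), (0:ℝ)) :
          Lp ℝ 2 mu01 × ℝ) ∈ N := by
      intro g
      have hcl : (BoundedContinuousFunction.toLp 2 mu01 ℝ g : Lp ℝ 2 mu01)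
          ∈ closure (Set.range fun p : ℝ[X] => ((poly_memLp p).toLp _ : Lp ℝ 2 mu01)) := by
        rw [Metric.mem_closure_iff]
        intro ε hε
        obtain ⟨p, hp⟩ := exists_polynomial_near_of_continuousOn (-1) 1 g
          (g.continuous.continuousOn) (ε/4) (by linarith)
        refine ⟨_, ⟨p, rfl⟩, ?_⟩
        rw [Lp.dist_def]
        have hae : (⇑(BoundedContinuousFunction.toLp 2 mu01 ℝ g)
            - ⇑((poly_memLp p).toLp _ : Lp ℝ 2 mu01)) =ᵐ[mu01] fun x => g x - p.eval x := by
          filter_upwards [BoundedContinuousFunction.coeFn_toLp 2 mu01 ℝ g,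
            MemLp.coeFn_toLp (poly_memLp p)] with x h1 h2
          simp [h1, h2]
        rw [eLpNorm_congr_ae hae]
        have hb : ∀ᵐ x ∂mu01, ‖g x - p.eval x‖ ≤ ε/4 := by
          rw [hres]
          refine (ae_restrict_iff' measurableSet_Icc).2 (ae_of_all _ fun x hx => ?_)
          rw [Real.norm_eq_abs, abs_sub_comm]
          exact (hp x hx).le
        have hle := eLpNorm_le_of_ae_bound (p := 2) (μ := mu01) hb
        have hmuu : mu01 Set.univ = ENNReal.ofReal 2 := by
          rw [hres, Measure.restrict_apply_univ, Real.volume_Icc]; norm_num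
        rw [hmuu] at hle
        have hfin : (ENNReal.ofReal 2) ^ (2:ENNReal).toReal⁻¹ * ENNReal.ofReal (ε/4) ≠ ⊤ :=
          ENNReal.mul_ne_top
            (ENNReal.rpow_ne_top_of_nonneg (by norm_num) ENNReal.ofReal_ne_top)
            ENNReal.ofReal_ne_top
        calc (eLpNorm (fun x => g x - p.eval x) 2 mu01).toReal
            ≤ ((ENNReal.ofReal 2) ^ (2:ENNReal).toReal⁻¹ * ENNReal.ofReal (ε/4)).toReal :=
              ENNReal.toReal_mono hfin hle
          _ = (2:ℝ) ^ ((2:ENNReal).toReal⁻¹) * (ε/4) := by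
              rw [ENNReal.toReal_mul, ← ENNReal.toReal_rpow,
                ENNReal.toReal_ofReal (by norm_num : (0:ℝ) ≤ 2),
                ENNReal.toReal_ofReal (by linarith : (0:ℝ) ≤ ε/4)]
          _ < ε := by
              have h2t : (2:ENNReal).toReal⁻¹ = (2:ℝ)⁻¹ := by norm_num
              rw [h2t]
              have hle2 : (2:ℝ) ^ ((2:ℝ)⁻¹) ≤ 2 := by
                have := Real.rpow_le_rpow_of_exponent_le (x := 2)
                  (by norm_num) (by norm_num : (2:ℝ)⁻¹ ≤ 1)
                simpa using this
              have hpos : (0:ℝ) < (2:ℝ) ^ ((2:ℝ)⁻¹) := Real.rpow_pos_of_pos (by norm_num) _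
              nlinarith
      have hsubset : closure (Set.range fun p : ℝ[X] => ((poly_memLp p).toLp _ : Lp ℝ 2 mu01))
          ⊆ {f : Lp ℝ 2 mu01 | ((f, (0:ℝ)) : Lp ℝ 2 mu01 × ℝ) ∈ N} :=
        closure_minimal (by rintro _ ⟨p, rfl⟩; exact hpoly0 p) hS0closed
      exact hsubset hcl
    intro f
    have hf : f ∈ closure (Set.range ⇑(BoundedContinuousFunction.toLp (E := ℝ) 2 mu01 ℝ)) :=
      hdr f
    have hsubset2 : closure (Set.range ⇑(BoundedContinuousFunction.toLp (E := ℝ) 2 mu01 ℝ))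
        ⊆ {f : Lp ℝ 2 mu01 | ((f, (0:ℝ)) : Lp ℝ 2 mu01 × ℝ) ∈ N} :=
      closure_minimal (by rintro _ ⟨g, rfl⟩; exact hkey g) hS0closed
    exact hsubset2 hf
  intro z
  have h1 : ((z.1, (0:ℝ)) : Lp ℝ 2 mu01 × ℝ) ∈ N := hall0 z.1
  have h2 : (((0 : Lp ℝ 2 mu01), z.2) : Lp ℝ 2 mu01 × ℝ) ∈ N := by
    have := N.smul_mem z.2 h01
    simpa using this
  have h3 := N.add_mem h1 h2
  have h4 : z ∈ N := by
    have : ((z.1, (0:ℝ)) : Lp ℝ 2 mu01 × ℝ) + ((0 : Lp ℝ 2 mu01), z.2) = z := by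
      ext <;> simp
    rwa [this] at h3
  exact h4
end

section
/- Under the stated hypotheses, the following dissipativity estimate holds: (1/τ)·∫_{−τ}^{0} ⟨ψ′(θ), ψ(θ)⟩ dθ + ⟨L_S ψ(0) + B ψ(−τ) + ∫_{−τ}^{0} C(s) ψ(s) ds, ψ(0)⟩ ≤ ω·( (1/τ)·∫_{−τ}^{0} |ψ(θ)|² dθ + |ψ(0)|² ), where ω := 1 + 1/(2τ) + |L_S| + (τ/2)·|B|² + (τ/4)·‖C‖²_{L²}. -/
open MeasureTheory intervalIntegral Set
open scoped RealInnerProductSpace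

private lemma dde_amgm1 (τ m b a : ℝ) (hτ : 0 < τ) :
    m * b * a ≤ 1 / (2 * τ) * b ^ 2 + τ / 2 * m ^ 2 * a ^ 2 := by
  have hne : (τ:ℝ) ≠ 0 := ne_of_gt hτ
  have h : 1 / (2 * τ) * b ^ 2 + τ / 2 * m ^ 2 * a ^ 2 - m * b * a
      = (b - τ * m * a) ^ 2 / (2 * τ) := by
    field_simp
    ring
  have h2 : (0:ℝ) ≤ (b - τ * m * a) ^ 2 / (2 * τ) :=
    div_nonneg (sq_nonneg _) (by linarith)
  linarith

private lemma dde_amgm2 (τ c p a : ℝ) (hτ : 0 < τ) :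
    c * p * a ≤ τ / 4 * a ^ 2 * c ^ 2 + 1 / τ * p ^ 2 := by
  have hne : (τ:ℝ) ≠ 0 := ne_of_gt hτ
  have h : τ / 4 * a ^ 2 * c ^ 2 + 1 / τ * p ^ 2 - c * p * a
      = (τ * a * c / 2 - p) ^ 2 / τ := by
    field_simp
    ring
  have h2 : (0:ℝ) ≤ (τ * a * c / 2 - p) ^ 2 / τ := div_nonneg (sq_nonneg _) hτ.le
  linarith

private lemma dde_final_aux (τ a b l m IC Iψ TL TB TC : ℝ) (hτ : 0 < τ)
    (ha : 0 ≤ a) (hl : 0 ≤ l) (hm : 0 ≤ m) (hIC : 0 ≤ IC) (hIψ : 0 ≤ Iψ)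
    (hTL : TL ≤ l * a ^ 2)
    (hTB : TB ≤ 1 / (2 * τ) * b ^ 2 + τ / 2 * m ^ 2 * a ^ 2)
    (hTC : TC ≤ τ / 4 * a ^ 2 * IC + 1 / τ * Iψ) :
    1 / τ * ((a ^ 2 - b ^ 2) / 2) + (TL + TB + TC)
      ≤ (1 + 1 / (2 * τ) + l + τ / 2 * m ^ 2 + τ / 4 * IC) * (1 / τ * Iψ + a ^ 2) := by
  have e : 1 / τ * ((a ^ 2 - b ^ 2) / 2) = 1 / (2 * τ) * a ^ 2 - 1 / (2 * τ) * b ^ 2 := by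
    ring
  have hu : (0:ℝ) ≤ 1 / τ := by positivity
  have p1 : (0:ℝ) ≤ 1 / (2 * τ) * (1 / τ * Iψ) := by positivity
  have p2 : (0:ℝ) ≤ l * (1 / τ * Iψ) := by positivity
  have p3 : (0:ℝ) ≤ τ / 2 * m ^ 2 * (1 / τ * Iψ) := by positivity
  have p4 : (0:ℝ) ≤ τ / 4 * IC * (1 / τ * Iψ) := by positivity
  nlinarith [sq_nonneg a, p1, p2, p3, p4, e]

/-- Dissipativity estimate for the DDE generator: for `ψ` continuously differentiable on
`[-τ,0]` with values in `ℝ^d`,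
`(1/τ)∫⟨ψ',ψ⟩ + ⟨L_S ψ(0) + B ψ(-τ) + ∫ C(s)ψ(s) ds, ψ(0)⟩
  ≤ ω ((1/τ)∫|ψ|² + |ψ(0)|²)`
with `ω = 1 + 1/(2τ) + |L_S| + (τ/2)|B|² + (τ/4)‖C‖²_{L²}`. -/
theorem dde_generator_dissipative (d : ℕ) (hd : 1 ≤ d) (τ : ℝ) (hτ : 0 < τ)
    (LS B : EuclideanSpace ℝ (Fin d) →L[ℝ] EuclideanSpace ℝ (Fin d))
    (C : ℝ → (EuclideanSpace ℝ (Fin d) →L[ℝ] EuclideanSpace ℝ (Fin d)))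
    (hCmeas : AEStronglyMeasurable C (volume.restrict (Icc (-τ) 0)))
    (hCL2 : IntervalIntegrable (fun s => ‖C s‖ ^ 2) volume (-τ) 0)
    (ψ ψ' : ℝ → EuclideanSpace ℝ (Fin d))
    (hψ : ∀ θ ∈ Icc (-τ) 0, HasDerivWithinAt ψ (ψ' θ) (Icc (-τ) 0) θ)
    (hψ' : ContinuousOn ψ' (Icc (-τ) 0))
    (hCψ : IntervalIntegrable (fun s => C s (ψ s)) volume (-τ) 0) :
    (1 / τ) * (∫ θ in (-τ)..0, ⟪ψ' θ, ψ θ⟫)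
        + ⟪LS (ψ 0) + B (ψ (-τ)) + ∫ s in (-τ)..0, C s (ψ s), ψ 0⟫
      ≤ (1 + 1 / (2 * τ) + ‖LS‖ + (τ / 2) * ‖B‖ ^ 2
            + (τ / 4) * ∫ s in (-τ)..0, ‖C s‖ ^ 2)
          * ((1 / τ) * (∫ θ in (-τ)..0, ‖ψ θ‖ ^ 2) + ‖ψ 0‖ ^ 2) := by
  have hab : (-τ : ℝ) ≤ 0 := by linarith
  have hm0 : (-τ : ℝ) ∈ Icc (-τ) 0 := ⟨le_refl _, hab⟩
  have hm1 : (0 : ℝ) ∈ Icc (-τ) 0 := ⟨hab, le_refl _⟩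
  have hψc : ContinuousOn ψ (Icc (-τ) 0) := fun x hx => (hψ x hx).continuousWithinAt
  -- continuity of the integrand ⟪ψ', ψ⟫
  have hinncont : ContinuousOn (fun θ => ⟪ψ' θ, ψ θ⟫) (Icc (-τ) 0) :=
    ContinuousOn.inner hψ' hψc
  have huIcc : uIcc (-τ) (0:ℝ) = Icc (-τ) 0 := uIcc_of_le hab
  have hinnint : IntervalIntegrable (fun θ => ⟪ψ' θ, ψ θ⟫) volume (-τ) 0 :=
    (huIcc ▸ hinncont).intervalIntegrable
  -- FTC: ∫ 2⟪ψ',ψ⟫ = ‖ψ 0‖² - ‖ψ (-τ)‖²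
  have hFTC : (∫ θ in (-τ)..0, (2:ℝ) * ⟪ψ' θ, ψ θ⟫)
      = ‖ψ 0‖ ^ 2 - ‖ψ (-τ)‖ ^ 2 := by
    have hcont : ContinuousOn (fun t => ⟪ψ t, ψ t⟫) (Icc (-τ) 0) := hψc.inner hψc
    have hderiv : ∀ x ∈ Ioo (-τ) (0:ℝ),
        HasDerivWithinAt (fun t => ⟪ψ t, ψ t⟫) ((2:ℝ) * ⟪ψ' x, ψ x⟫) (Ioi x) x := by
      intro x hx
      have hmem : Icc (-τ) 0 ∈ nhds x := Icc_mem_nhds hx.1 hx.2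
      have hd : HasDerivAt ψ (ψ' x) x := (hψ x (Ioo_subset_Icc_self hx)).hasDerivAt hmem
      have h2 : HasDerivAt (fun t => ⟪ψ t, ψ t⟫) (⟪ψ x, ψ' x⟫ + ⟪ψ' x, ψ x⟫) x :=
        hd.inner ℝ hd
      have : (⟪ψ x, ψ' x⟫ + ⟪ψ' x, ψ x⟫ : ℝ) = 2 * ⟪ψ' x, ψ x⟫ := by
        rw [real_inner_comm]; ring
      rw [this] at h2
      exact h2.hasDerivWithinAt
    have hint : IntervalIntegrable (fun θ => (2:ℝ) * ⟪ψ' θ, ψ θ⟫) volume (-τ) 0 :=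
      hinnint.const_mul 2
    have := integral_eq_sub_of_hasDeriv_right_of_le hab hcont hderiv hint
    rw [this, real_inner_self_eq_norm_sq, real_inner_self_eq_norm_sq]
  have hI : (∫ θ in (-τ)..0, ⟪ψ' θ, ψ θ⟫) = (‖ψ 0‖ ^ 2 - ‖ψ (-τ)‖ ^ 2) / 2 := by
    have h2 : (∫ θ in (-τ)..0, (2:ℝ) * ⟪ψ' θ, ψ θ⟫)
        = 2 * ∫ θ in (-τ)..0, ⟪ψ' θ, ψ θ⟫ := intervalIntegral.integral_const_mul _ _
    rw [h2] at hFTC; linarith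
  -- bounds on the three inner product terms
  set a := ‖ψ 0‖ with ha_def
  set b := ‖ψ (-τ)‖ with hb_def
  have hTL : ⟪LS (ψ 0), ψ 0⟫ ≤ ‖LS‖ * a ^ 2 := by
    calc ⟪LS (ψ 0), ψ 0⟫ ≤ ‖LS (ψ 0)‖ * ‖ψ 0‖ := real_inner_le_norm _ _
      _ ≤ (‖LS‖ * ‖ψ 0‖) * ‖ψ 0‖ :=
          mul_le_mul_of_nonneg_right (LS.le_opNorm _) (norm_nonneg _)
      _ = ‖LS‖ * a ^ 2 := by rw [← ha_def]; ring
  have hTB : ⟪B (ψ (-τ)), ψ 0⟫ ≤ 1 / (2 * τ) * b ^ 2 + τ / 2 * ‖B‖ ^ 2 * a ^ 2 := by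
    have h1 : ⟪B (ψ (-τ)), ψ 0⟫ ≤ ‖B‖ * b * a := by
      calc ⟪B (ψ (-τ)), ψ 0⟫ ≤ ‖B (ψ (-τ))‖ * ‖ψ 0‖ := real_inner_le_norm _ _
        _ ≤ (‖B‖ * ‖ψ (-τ)‖) * ‖ψ 0‖ :=
            mul_le_mul_of_nonneg_right (B.le_opNorm _) (norm_nonneg _)
        _ = ‖B‖ * b * a := by rw [← ha_def, ← hb_def]
    have h2 := dde_amgm1 τ ‖B‖ b a hτ
    linarith
  -- the C term
  have hψsq : IntervalIntegrable (fun θ => ‖ψ θ‖ ^ 2) volume (-τ) 0 := by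
    apply ContinuousOn.intervalIntegrable
    rw [huIcc]
    exact (hψc.norm).pow 2
  have hCb : ⟪(∫ s in (-τ)..0, C s (ψ s)), ψ 0⟫
      ≤ τ / 4 * a ^ 2 * (∫ s in (-τ)..0, ‖C s‖ ^ 2)
        + 1 / τ * (∫ θ in (-τ)..0, ‖ψ θ‖ ^ 2) := by
    have hstep1 : ⟪(∫ s in (-τ)..0, C s (ψ s)), ψ 0⟫
        ≤ (∫ s in (-τ)..0, ‖C s (ψ s)‖) * a := by
      calc ⟪(∫ s in (-τ)..0, C s (ψ s)), ψ 0⟫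
          ≤ ‖∫ s in (-τ)..0, C s (ψ s)‖ * ‖ψ 0‖ := real_inner_le_norm _ _
        _ ≤ (∫ s in (-τ)..0, ‖C s (ψ s)‖) * a := by
            rw [← ha_def]
            exact mul_le_mul_of_nonneg_right
              (intervalIntegral.norm_integral_le_integral_norm hab) (norm_nonneg _)
    have heq : (∫ s in (-τ)..0, ‖C s (ψ s)‖) * a
        = ∫ s in (-τ)..0, ‖C s (ψ s)‖ * a :=
      (intervalIntegral.integral_mul_const _ _).symm
    have hintL : IntervalIntegrable (fun s => ‖C s (ψ s)‖ * a) volume (-τ) 0 :=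
      hCψ.norm.mul_const a
    have hintR : IntervalIntegrable
        (fun s => τ / 4 * a ^ 2 * ‖C s‖ ^ 2 + 1 / τ * ‖ψ s‖ ^ 2) volume (-τ) 0 :=
      (hCL2.const_mul (τ / 4 * a ^ 2)).add (hψsq.const_mul (1 / τ))
    have hmono : (∫ s in (-τ)..0, ‖C s (ψ s)‖ * a)
        ≤ ∫ s in (-τ)..0, (τ / 4 * a ^ 2 * ‖C s‖ ^ 2 + 1 / τ * ‖ψ s‖ ^ 2) := by
      apply intervalIntegral.integral_mono_on hab hintL hintR
      intro s hs
      have hcs : ‖C s (ψ s)‖ ≤ ‖C s‖ * ‖ψ s‖ := (C s).le_opNorm _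
      have h1 : ‖C s (ψ s)‖ * a ≤ ‖C s‖ * ‖ψ s‖ * a :=
        mul_le_mul_of_nonneg_right hcs (norm_nonneg _)
      have h2 := dde_amgm2 τ ‖C s‖ ‖ψ s‖ a hτ
      linarith
    have hsplit : (∫ s in (-τ)..0, (τ / 4 * a ^ 2 * ‖C s‖ ^ 2 + 1 / τ * ‖ψ s‖ ^ 2))
        = τ / 4 * a ^ 2 * (∫ s in (-τ)..0, ‖C s‖ ^ 2)
          + 1 / τ * (∫ θ in (-τ)..0, ‖ψ θ‖ ^ 2) := by
      rw [intervalIntegral.integral_add (hCL2.const_mul _) (hψsq.const_mul _),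
        intervalIntegral.integral_const_mul, intervalIntegral.integral_const_mul]
    calc ⟪(∫ s in (-τ)..0, C s (ψ s)), ψ 0⟫
        ≤ (∫ s in (-τ)..0, ‖C s (ψ s)‖) * a := hstep1
      _ = ∫ s in (-τ)..0, ‖C s (ψ s)‖ * a := heq
      _ ≤ _ := hmono
      _ = _ := hsplit
  -- nonnegativity of the integrals
  have hIC : 0 ≤ ∫ s in (-τ)..0, ‖C s‖ ^ 2 :=
    intervalIntegral.integral_nonneg hab (fun s _ => sq_nonneg _)
  have hIψ : 0 ≤ ∫ θ in (-τ)..0, ‖ψ θ‖ ^ 2 :=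
    intervalIntegral.integral_nonneg hab (fun s _ => sq_nonneg _)
  -- assemble
  rw [inner_add_left, inner_add_left, hI]
  have := dde_final_aux τ a b ‖LS‖ ‖B‖ (∫ s in (-τ)..0, ‖C s‖ ^ 2)
    (∫ θ in (-τ)..0, ‖ψ θ‖ ^ 2) ⟪LS (ψ 0), ψ 0⟫ ⟪B (ψ (-τ)), ψ 0⟫
    ⟪(∫ s in (-τ)..0, C s (ψ s)), ψ 0⟫ hτ (norm_nonneg _) (norm_nonneg _)
    (norm_nonneg _) hIC hIψ hTL hTB hCb
  linarith [this]
end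

section
/- Let X be a real Hilbert space and M : X → X a continuous linear map such that ⟨M x, x⟩ ≤ ω·‖x‖² for every x ∈ X, where ω is a real constant. Then for every t ≥ 0 and every x ∈ X, ‖exp(t·M) x‖ ≤ e^{ω t}·‖x‖, where exp denotes the operator exponential of the bounded operator t·M. -/
open scoped RealInnerProductSpace

/-- If `M` is a bounded operator on a real Hilbert space `X` with `⟨Mx, x⟩ ≤ ω ‖x‖²` for all
`x`, then the operator exponential satisfies `‖exp(tM) x‖ ≤ e^{ωt} ‖x‖` for all `t ≥ 0`. -/
theorem norm_exp_apply_le_of_inner_le {X : Type*} [NormedAddCommGroup X]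
    [InnerProductSpace ℝ X] [CompleteSpace X] (M : X →L[ℝ] X) (ω : ℝ)
    (h : ∀ x : X, ⟪M x, x⟫ ≤ ω * ‖x‖ ^ 2) :
    ∀ t : ℝ, 0 ≤ t → ∀ x : X,
      ‖(NormedSpace.exp (t • M)) x‖ ≤ Real.exp (ω * t) * ‖x‖ := by
  intro t ht x
  set u : ℝ → X := fun s => (NormedSpace.exp (s • M)) x with hu_def
  have hu : ∀ s : ℝ, HasDerivAt u (M (u s)) s := by
    intro s
    have h1 : HasDerivAt (fun r : ℝ => NormedSpace.exp (r • M))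
        (M * NormedSpace.exp (s • M)) s := hasDerivAt_exp_smul_const' M s
    have h2 := h1.clm_apply (hasDerivAt_const s x)
    simpa [u, ContinuousLinearMap.mul_apply] using h2
  set f : ℝ → ℝ := fun s => ⟪u s, u s⟫ with hf_def
  have hf : ∀ s : ℝ, HasDerivAt f (2 * ⟪M (u s), u s⟫) s := by
    intro s
    have := (hu s).inner ℝ (hu s)
    simpa [f, real_inner_comm, two_mul] using this
  set g : ℝ → ℝ := fun s => Real.exp (-(2 * ω) * s) * f s with hg_def
  have hg : ∀ s : ℝ, HasDerivAt g
      (Real.exp (-(2 * ω) * s) * (-(2 * ω)) * f s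
        + Real.exp (-(2 * ω) * s) * (2 * ⟪M (u s), u s⟫)) s := by
    intro s
    have hlin : HasDerivAt (fun r : ℝ => -(2 * ω) * r) (-(2 * ω)) s := by
      simpa using (hasDerivAt_id s).const_mul (-(2 * ω))
    exact hlin.exp.mul (hf s)
  have hg_nonpos : ∀ s : ℝ, deriv g s ≤ 0 := by
    intro s
    rw [(hg s).deriv]
    have hfs : f s = ‖u s‖ ^ 2 := real_inner_self_eq_norm_sq (u s)
    have hin : ⟪M (u s), u s⟫ ≤ ω * f s := by rw [hfs]; exact h (u s)
    have hexp : 0 < Real.exp (-(2 * ω) * s) := Real.exp_pos _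
    have h3 : Real.exp (-(2 * ω) * s) * (2 * ⟪M (u s), u s⟫)
        ≤ Real.exp (-(2 * ω) * s) * (2 * (ω * f s)) := by
      apply mul_le_mul_of_nonneg_left _ hexp.le
      linarith
    nlinarith [h3]
  have hmono : Antitone g := antitone_of_deriv_nonpos
    (fun s => (hg s).differentiableAt) hg_nonpos
  have key : g t ≤ g 0 := hmono ht
  have hg0 : g 0 = ‖x‖ ^ 2 := by
    simp [g, f, u, real_inner_self_eq_norm_sq]
  rw [hg0] at key
  have hEE : Real.exp (2 * ω * t) * Real.exp (-(2 * ω) * t) = 1 := by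
    have hz : 2 * ω * t + -(2 * ω) * t = 0 := by ring
    rw [← Real.exp_add, hz, Real.exp_zero]
  have hft : f t ≤ Real.exp (2 * ω * t) * ‖x‖ ^ 2 := by
    calc f t = Real.exp (2 * ω * t) * (Real.exp (-(2 * ω) * t) * f t) := by
          rw [← mul_assoc, hEE, one_mul]
      _ ≤ Real.exp (2 * ω * t) * ‖x‖ ^ 2 :=
          mul_le_mul_of_nonneg_left key (Real.exp_pos _).le
  have hsq : ‖u t‖ ^ 2 ≤ (Real.exp (ω * t) * ‖x‖) ^ 2 := by
    have h2 : (Real.exp (ω * t) * ‖x‖) ^ 2 = Real.exp (2 * ω * t) * ‖x‖ ^ 2 := by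
      rw [mul_pow, sq (Real.exp (ω * t)), ← Real.exp_add]
      congr 1
      ring
    rw [h2, ← real_inner_self_eq_norm_sq]
    exact hft
  have h1 : 0 ≤ Real.exp (ω * t) * ‖x‖ := by positivity
  calc ‖u t‖ = Real.sqrt (‖u t‖ ^ 2) := by rw [Real.sqrt_sq (norm_nonneg _)]
    _ ≤ Real.sqrt ((Real.exp (ω * t) * ‖x‖) ^ 2) := Real.sqrt_le_sqrt hsq
    _ = Real.exp (ω * t) * ‖x‖ := Real.sqrt_sq h1
end

section
/- Under the stated hypotheses, set ε := sup_{t∈[0,T*]} ‖T(t)u₀ − S(t)(Π u₀)‖ and D := ∫₀^{T*} sup_{t∈[s,T*]} ‖(T(t−s) − S(t−s)∘Π)(G(u(s)))‖ ds (assumed finite, with integrable integrand). Then for every t ∈ [0,T*], ‖u(t) − v(t)‖ ≤ (ε + D)·exp( M·K·T*·e^{ω T*} ). -/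
open MeasureTheory intervalIntegral Set

open Filter in
lemma aux_cont_apply {X : Type*} [NormedAddCommGroup X] [NormedSpace ℝ X]
    (M ω : ℝ) (C : ℝ → X →L[ℝ] X)
    (hC : ∀ x : X, ContinuousOn (fun t => C t x) (Ici 0))
    (hCb : ∀ t : ℝ, 0 ≤ t → ‖C t‖ ≤ M * Real.exp (ω * t))
    {A : Set ℝ} {f : ℝ → ℝ} {g : ℝ → X}
    (hf : ContinuousOn f A) (hf0 : ∀ s ∈ A, 0 ≤ f s) (hg : ContinuousOn g A) :
    ContinuousOn (fun s => C (f s) (g s)) A := by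
  intro s₀ hs₀
  have h1 : ContinuousWithinAt (fun s => C (f s) (g s₀)) A s₀ :=
    ((hC (g s₀)) (f s₀) (hf0 s₀ hs₀)).comp (hf s₀ hs₀) hf0
  have hfc : Tendsto f (nhdsWithin s₀ A) (nhds (f s₀)) := hf s₀ hs₀
  have hgc : Tendsto (fun s => ‖g s - g s₀‖) (nhdsWithin s₀ A) (nhds 0) := by
    have h : Tendsto (fun s => ‖g s - g s₀‖) (nhdsWithin s₀ A) (nhds ‖g s₀ - g s₀‖) :=
      ((hg s₀ hs₀).sub (tendsto_const_nhds (x := g s₀))).norm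
    simpa using h
  have ht : Tendsto (fun s => M * Real.exp (ω * f s) * ‖g s - g s₀‖)
      (nhdsWithin s₀ A) (nhds 0) := by
    have : Tendsto (fun s => M * Real.exp (ω * f s)) (nhdsWithin s₀ A)
        (nhds (M * Real.exp (ω * f s₀))) :=
      ((Real.continuous_exp.tendsto _).comp (hfc.const_mul ω)).const_mul M
    simpa using this.mul hgc
  have h2 : Tendsto (fun s => C (f s) (g s - g s₀)) (nhdsWithin s₀ A) (nhds 0) := by
    refine squeeze_zero_norm' ?_ ht
    filter_upwards [self_mem_nhdsWithin] with s hs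
    calc ‖C (f s) (g s - g s₀)‖ ≤ ‖C (f s)‖ * ‖g s - g s₀‖ := (C (f s)).le_opNorm _
      _ ≤ M * Real.exp (ω * f s) * ‖g s - g s₀‖ :=
        mul_le_mul_of_nonneg_right (hCb _ (hf0 s hs)) (norm_nonneg _)
  have heq : (fun s => C (f s) (g s)) = fun s => C (f s) (g s - g s₀) + C (f s) (g s₀) := by
    ext s; rw [map_sub]; abel
  unfold ContinuousWithinAt
  rw [heq]
  simpa using h2.add h1


/-- Gronwall estimate for the difference between the mild solution `u` of the abstract ODE
and the mild solution `v` of its (Galerkin-type) approximation: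
`‖u(t) - v(t)‖ ≤ (ε + D) exp(M K T* e^{ω T*})` on `[0, T*]`, where
`ε = sup_{[0,T*]} ‖T(t)u₀ - S(t)Πu₀‖` and
`D = ∫₀^{T*} sup_{t∈[s,T*]} ‖(T(t-s) - S(t-s)Π)(G(u(s)))‖ ds`. -/
theorem mild_solution_approximation_gronwall {X : Type*} [NormedAddCommGroup X]
    [NormedSpace ℝ X] [CompleteSpace X]
    (M ω K Tstar : ℝ) (hM : 1 ≤ M) (hω : 0 ≤ ω) (hK : 0 ≤ K) (hTstar : 0 < Tstar)
    (T S : ℝ → X →L[ℝ] X)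
    (hTcont : ∀ x : X, ContinuousOn (fun t => T t x) (Ici 0))
    (hScont : ∀ x : X, ContinuousOn (fun t => S t x) (Ici 0))
    (hTbound : ∀ t : ℝ, 0 ≤ t → ‖T t‖ ≤ M * Real.exp (ω * t))
    (hSbound : ∀ t : ℝ, 0 ≤ t → ‖S t‖ ≤ M * Real.exp (ω * t))
    (P : X →L[ℝ] X) (hP : ‖P‖ ≤ 1)
    (G : X → X) (hG : ∀ x y : X, ‖G x - G y‖ ≤ K * ‖x - y‖)
    (u₀ : X) (u v : ℝ → X)
    (hu_cont : ContinuousOn u (Icc 0 Tstar)) (hv_cont : ContinuousOn v (Icc 0 Tstar))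
    (hu : ∀ t ∈ Icc (0 : ℝ) Tstar, u t = T t u₀ + ∫ s in (0 : ℝ)..t, T (t - s) (G (u s)))
    (hv : ∀ t ∈ Icc (0 : ℝ) Tstar,
      v t = S t (P u₀) + ∫ s in (0 : ℝ)..t, S (t - s) (P (G (v s))))
    (ε : ℝ) (hε : ε = ⨆ t : Icc (0 : ℝ) Tstar, ‖T (t : ℝ) u₀ - S (t : ℝ) (P u₀)‖)
    (dN : ℝ → ℝ)
    (hdN : ∀ s : ℝ, dN s =
      ⨆ t : Icc s Tstar, ‖T ((t : ℝ) - s) (G (u s)) - S ((t : ℝ) - s) (P (G (u s)))‖)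
    (hdN_int : IntervalIntegrable dN volume 0 Tstar)
    (D : ℝ) (hD : D = ∫ s in (0 : ℝ)..Tstar, dN s) :
    ∀ t ∈ Icc (0 : ℝ) Tstar,
      ‖u t - v t‖ ≤ (ε + D) * Real.exp (M * K * Tstar * Real.exp (ω * Tstar)) := by
  have hTle : (0:ℝ) ≤ Tstar := hTstar.le
  have hM0 : (0:ℝ) ≤ M := zero_le_one.trans hM
  have hexp1 : (1:ℝ) ≤ Real.exp (ω * Tstar) := Real.one_le_exp (by positivity)
  set K' : ℝ := M * K * Real.exp (ω * Tstar) with hK'def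
  have hK'0 : 0 ≤ K' := by positivity
  -- continuity of G
  have hGcont : Continuous G := by
    have : LipschitzWith (Real.toNNReal K) G := by
      apply LipschitzWith.of_dist_le_mul
      intro x y
      rw [dist_eq_norm, dist_eq_norm]
      exact (hG x y).trans (mul_le_mul_of_nonneg_right (Real.le_coe_toNNReal K) (norm_nonneg _))
    exact this.continuous
  have hPle : ∀ x : X, ‖P x‖ ≤ ‖x‖ := fun x =>
    (P.le_opNorm x).trans (mul_le_of_le_one_left (norm_nonneg x) hP)
  -- uniform operator bounds
  have hop : ∀ (C : ℝ → X →L[ℝ] X), (∀ t : ℝ, 0 ≤ t → ‖C t‖ ≤ M * Real.exp (ω * t)) →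
      ∀ r : ℝ, 0 ≤ r → r ≤ Tstar → ∀ x : X, ‖C r x‖ ≤ M * Real.exp (ω * Tstar) * ‖x‖ := by
    intro C hCb r hr0 hrT x
    calc ‖C r x‖ ≤ ‖C r‖ * ‖x‖ := (C r).le_opNorm x
      _ ≤ M * Real.exp (ω * r) * ‖x‖ :=
        mul_le_mul_of_nonneg_right (hCb r hr0) (norm_nonneg _)
      _ ≤ M * Real.exp (ω * Tstar) * ‖x‖ := by
        gcongr
  -- nonnegativity
  have hε0 : 0 ≤ ε := hε ▸ Real.iSup_nonneg (fun t => norm_nonneg _)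
  have hdN0 : ∀ s : ℝ, 0 ≤ dN s := fun s => (hdN s) ▸ Real.iSup_nonneg (fun t => norm_nonneg _)
  have hD0 : 0 ≤ D := hD ▸ intervalIntegral.integral_nonneg hTle (fun s _ => hdN0 s)
  -- extension of ‖u - v‖
  have hw_cont : ContinuousOn (fun t => ‖u t - v t‖) (Icc 0 Tstar) := (hu_cont.sub hv_cont).norm
  set wex : ℝ → ℝ := Set.IccExtend hTle ((Icc (0:ℝ) Tstar).restrict (fun t => ‖u t - v t‖))
    with hwexdef
  have hwex_cont : Continuous wex := hw_cont.restrict.Icc_extend'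
  have hwex_eq : ∀ t ∈ Icc (0:ℝ) Tstar, wex t = ‖u t - v t‖ := by
    intro t ht
    rw [hwexdef, Set.IccExtend_of_mem hTle _ ht]
    rfl
  have hwex0 : ∀ t : ℝ, 0 ≤ wex t := fun t => norm_nonneg _
  -- key integral inequality
  have key : ∀ t ∈ Icc (0:ℝ) Tstar, wex t ≤ (ε + D) + K' * ∫ s in (0:ℝ)..t, wex s := by
    intro t ht
    obtain ⟨ht0, htT⟩ := ht
    have hsub : Icc (0:ℝ) t ⊆ Icc 0 Tstar := Icc_subset_Icc le_rfl htT
    have hf0 : ∀ s ∈ Icc (0:ℝ) t, (0:ℝ) ≤ t - s := fun s hs => sub_nonneg.2 hs.2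
    have hfc : ContinuousOn (fun s : ℝ => t - s) (Icc 0 t) :=
      (continuous_const.sub continuous_id).continuousOn
    have hGu : ContinuousOn (fun s => G (u s)) (Icc 0 t) :=
      hGcont.comp_continuousOn (hu_cont.mono hsub)
    have hPGv : ContinuousOn (fun s => P (G (v s))) (Icc 0 t) :=
      (P.continuous.comp hGcont).comp_continuousOn (hv_cont.mono hsub)
    have hfin1 : ContinuousOn (fun s => T (t - s) (G (u s))) (Icc 0 t) :=
      aux_cont_apply M ω T hTcont hTbound hfc hf0 hGu
    have hfin2 : ContinuousOn (fun s => S (t - s) (P (G (v s)))) (Icc 0 t) :=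
      aux_cont_apply M ω S hScont hSbound hfc hf0 hPGv
    have hint1 : IntervalIntegrable (fun s => T (t - s) (G (u s))) volume 0 t :=
      hfin1.intervalIntegrable_of_Icc ht0
    have hint2 : IntervalIntegrable (fun s => S (t - s) (P (G (v s)))) volume 0 t :=
      hfin2.intervalIntegrable_of_Icc ht0
    have hdiff : u t - v t = (T t u₀ - S t (P u₀)) +
        ∫ s in (0:ℝ)..t, (T (t - s) (G (u s)) - S (t - s) (P (G (v s)))) := by
      rw [hu t ⟨ht0, htT⟩, hv t ⟨ht0, htT⟩, intervalIntegral.integral_sub hint1 hint2]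
      abel
    -- bound the first term by ε
    have hεb : ‖T t u₀ - S t (P u₀)‖ ≤ ε := by
      rw [hε]
      have hbdd : BddAbove (Set.range fun r : Icc (0:ℝ) Tstar =>
          ‖T (r:ℝ) u₀ - S (r:ℝ) (P u₀)‖) := by
        refine ⟨2 * (M * Real.exp (ω * Tstar) * ‖u₀‖), ?_⟩
        rintro _ ⟨r, rfl⟩
        calc ‖T (r:ℝ) u₀ - S (r:ℝ) (P u₀)‖ ≤ ‖T (r:ℝ) u₀‖ + ‖S (r:ℝ) (P u₀)‖ := norm_sub_le _ _
          _ ≤ M * Real.exp (ω * Tstar) * ‖u₀‖ + M * Real.exp (ω * Tstar) * ‖P u₀‖ :=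
            add_le_add (hop T hTbound _ r.2.1 r.2.2 u₀) (hop S hSbound _ r.2.1 r.2.2 (P u₀))
          _ ≤ 2 * (M * Real.exp (ω * Tstar) * ‖u₀‖) := by
            have h := mul_le_mul_of_nonneg_left (hPle u₀)
              (by positivity : (0:ℝ) ≤ M * Real.exp (ω * Tstar))
            linarith
      exact le_ciSup hbdd (⟨t, ht0, htT⟩ : Icc (0:ℝ) Tstar)
    -- pointwise bound for the integrand
    have hpt : ∀ s ∈ Icc (0:ℝ) t,
        ‖T (t - s) (G (u s)) - S (t - s) (P (G (v s)))‖ ≤ dN s + K' * wex s := by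
      intro s hs
      obtain ⟨hs0, hst⟩ := hs
      have hsT : s ≤ Tstar := hst.trans htT
      have h1 : ‖T (t - s) (G (u s)) - S (t - s) (P (G (u s)))‖ ≤ dN s := by
        rw [hdN s]
        have hbdd : BddAbove (Set.range fun r : Icc s Tstar =>
            ‖T ((r:ℝ) - s) (G (u s)) - S ((r:ℝ) - s) (P (G (u s)))‖) := by
          refine ⟨2 * (M * Real.exp (ω * Tstar) * ‖G (u s)‖), ?_⟩
          rintro _ ⟨r, rfl⟩
          have hr0 : (0:ℝ) ≤ (r:ℝ) - s := sub_nonneg.2 r.2.1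
          have hrT : (r:ℝ) - s ≤ Tstar := by
            have := r.2.2
            linarith
          calc ‖T ((r:ℝ) - s) (G (u s)) - S ((r:ℝ) - s) (P (G (u s)))‖
              ≤ ‖T ((r:ℝ) - s) (G (u s))‖ + ‖S ((r:ℝ) - s) (P (G (u s)))‖ := norm_sub_le _ _
            _ ≤ M * Real.exp (ω * Tstar) * ‖G (u s)‖
                + M * Real.exp (ω * Tstar) * ‖P (G (u s))‖ :=
              add_le_add (hop T hTbound _ hr0 hrT _) (hop S hSbound _ hr0 hrT _)
            _ ≤ 2 * (M * Real.exp (ω * Tstar) * ‖G (u s)‖) := by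
              have h := mul_le_mul_of_nonneg_left (hPle (G (u s)))
                (by positivity : (0:ℝ) ≤ M * Real.exp (ω * Tstar))
              linarith
        exact le_ciSup hbdd (⟨t, hst, htT⟩ : Icc s Tstar)
      have h2 : ‖S (t - s) (P (G (u s))) - S (t - s) (P (G (v s)))‖ ≤ K' * wex s := by
        have heq2 : S (t - s) (P (G (u s))) - S (t - s) (P (G (v s)))
            = S (t - s) (P (G (u s) - G (v s))) := by
          rw [map_sub, map_sub]
        rw [heq2, hwex_eq s ⟨hs0, hsT⟩]
        calc ‖S (t - s) (P (G (u s) - G (v s)))‖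
            ≤ M * Real.exp (ω * Tstar) * ‖P (G (u s) - G (v s))‖ :=
            hop S hSbound _ (sub_nonneg.2 hst) (by linarith) _
          _ ≤ M * Real.exp (ω * Tstar) * (K * ‖u s - v s‖) := by
            refine mul_le_mul_of_nonneg_left ((hPle _).trans (hG _ _)) (by positivity)
          _ = K' * ‖u s - v s‖ := by rw [hK'def]; ring
      calc ‖T (t - s) (G (u s)) - S (t - s) (P (G (v s)))‖
          ≤ ‖T (t - s) (G (u s)) - S (t - s) (P (G (u s)))‖
            + ‖S (t - s) (P (G (u s))) - S (t - s) (P (G (v s)))‖ :=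
          norm_sub_le_norm_sub_add_norm_sub _ _ _
        _ ≤ dN s + K' * wex s := add_le_add h1 h2
    -- integrability of the comparison functions
    have hdN_int_t : IntervalIntegrable dN volume 0 t :=
      hdN_int.mono_set (by rw [uIcc_of_le ht0, uIcc_of_le hTle]; exact hsub)
    have hwex_int : IntervalIntegrable (fun s => K' * wex s) volume 0 t :=
      (continuous_const.mul hwex_cont).intervalIntegrable 0 t
    have hnorm_int : IntervalIntegrable
        (fun s => ‖T (t - s) (G (u s)) - S (t - s) (P (G (v s)))‖) volume 0 t :=
      ((hfin1.sub hfin2).norm).intervalIntegrable_of_Icc ht0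
    calc wex t = ‖u t - v t‖ := hwex_eq t ⟨ht0, htT⟩
      _ ≤ ‖T t u₀ - S t (P u₀)‖
          + ‖∫ s in (0:ℝ)..t, (T (t - s) (G (u s)) - S (t - s) (P (G (v s))))‖ := by
        rw [hdiff]; exact norm_add_le _ _
      _ ≤ ε + ∫ s in (0:ℝ)..t, ‖T (t - s) (G (u s)) - S (t - s) (P (G (v s)))‖ :=
        add_le_add hεb (intervalIntegral.norm_integral_le_integral_norm ht0)
      _ ≤ ε + ∫ s in (0:ℝ)..t, (dN s + K' * wex s) :=
        add_le_add le_rfl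
          (intervalIntegral.integral_mono_on ht0 hnorm_int (hdN_int_t.add hwex_int) hpt)
      _ = ε + ((∫ s in (0:ℝ)..t, dN s) + K' * ∫ s in (0:ℝ)..t, wex s) := by
        rw [intervalIntegral.integral_add hdN_int_t hwex_int,
          intervalIntegral.integral_const_mul]
      _ ≤ ε + (D + K' * ∫ s in (0:ℝ)..t, wex s) := by
        have hle : (∫ s in (0:ℝ)..t, dN s) ≤ D := by
          rw [hD]
          exact intervalIntegral.integral_mono_interval le_rfl ht0 htT
            (Filter.Eventually.of_forall fun s => hdN0 s) hdN_int
        linarith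
      _ = (ε + D) + K' * ∫ s in (0:ℝ)..t, wex s := by ring
  -- Gronwall
  set F : ℝ → ℝ := fun r => ∫ s in (0:ℝ)..r, wex s with hFdef
  have hFderiv : ∀ r : ℝ, HasDerivAt F (wex r) r := fun r =>
    intervalIntegral.integral_hasDerivAt_right (hwex_cont.intervalIntegrable 0 r)
      (hwex_cont.stronglyMeasurableAtFilter _ _) hwex_cont.continuousAt
  have hFcont : ContinuousOn F (Icc 0 Tstar) := fun r _ =>
    (hFderiv r).continuousAt.continuousWithinAt
  have hF0 : ∀ r : ℝ, 0 ≤ r → 0 ≤ F r := fun r hr =>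
    intervalIntegral.integral_nonneg hr fun s _ => hwex0 s
  have hgron := norm_le_gronwallBound_of_norm_deriv_right_le (f := F) (f' := wex) (δ := 0)
    (K := K') (ε := ε + D) (a := 0) (b := Tstar) hFcont
    (fun r _ => (hFderiv r).hasDerivWithinAt)
    (by simp [hFdef])
    (by
      intro r hr
      rw [Real.norm_of_nonneg (hwex0 r), Real.norm_of_nonneg (hF0 r hr.1)]
      have := key r ⟨hr.1, hr.2.le⟩
      linarith)
  intro t ht
  have hFt : F t ≤ gronwallBound 0 K' (ε + D) t := by
    have := hgron t ht
    rwa [Real.norm_of_nonneg (hF0 t ht.1), sub_zero] at this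
  have hkey := key t ht
  rw [← hwex_eq t ht]
  by_cases hK0 : K' = 0
  · rw [hK0, zero_mul, add_zero] at hkey
    have hCex : (ε + D) ≤ (ε + D) * Real.exp (M * K * Tstar * Real.exp (ω * Tstar)) := by
      nlinarith [Real.one_le_exp (show (0:ℝ) ≤ M * K * Tstar * Real.exp (ω * Tstar) by positivity)]
    linarith
  · have hgb : gronwallBound 0 K' (ε + D) t
        = (ε + D) / K' * (Real.exp (K' * t) - 1) := by
      rw [gronwallBound_of_K_ne_0 hK0]
      simp
    rw [hgb] at hFt
    have h3 : wex t ≤ (ε + D) * Real.exp (K' * t) := by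
      have h4 : K' * ((ε + D) / K' * (Real.exp (K' * t) - 1))
          = (ε + D) * (Real.exp (K' * t) - 1) := by
        field_simp
      nlinarith [mul_le_mul_of_nonneg_left hFt hK'0]
    have h5 : Real.exp (K' * t) ≤ Real.exp (M * K * Tstar * Real.exp (ω * Tstar)) := by
      apply Real.exp_le_exp.2
      have : K' * t ≤ K' * Tstar := mul_le_mul_of_nonneg_left ht.2 hK'0
      calc K' * t ≤ K' * Tstar := this
        _ = M * K * Tstar * Real.exp (ω * Tstar) := by rw [hK'def]; ring
    calc wex t ≤ (ε + D) * Real.exp (K' * t) := h3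
      _ ≤ (ε + D) * Real.exp (M * K * Tstar * Real.exp (ω * Tstar)) :=
        mul_le_mul_of_nonneg_left h5 (by linarith)
end

section
/- Under the stated hypotheses — in particular, assuming the strong, locally uniform convergence of the approximating semigroup families T_N to T (the conclusion of the Trotter–Kato theorem under conditions (A1) and (A2)) and that G is globally Lipschitz — the Galerkin mild solutions converge uniformly on bounded time intervals to the mild solution: for every T* > 0, lim_{N→∞} sup_{t∈[0,T*]} ‖u_N(t) − u(t)‖ = 0. -/
open MeasureTheory intervalIntegral Set Filter

/-- Joint continuity helper: if `S` is a strongly continuous, locally bounded operator family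
and `g` is continuous, then `s ↦ S (t - s) (g s)` is continuous on `[0, t]`. -/
private lemma flow_contOn {X : Type*} [NormedAddCommGroup X] [NormedSpace ℝ X]
    (S : ℝ → X →L[ℝ] X) (B t : ℝ)
    (hS : ∀ x : X, ContinuousOn (fun r => S r x) (Ici 0))
    (hB : ∀ r ∈ Icc (0:ℝ) t, ‖S r‖ ≤ B)
    (g : ℝ → X) (hg : Continuous g) :
    ContinuousOn (fun s => S (t - s) (g s)) (Icc (0:ℝ) t) := by
  intro s₀ hs₀
  have hmap : MapsTo (fun s => t - s) (Icc (0:ℝ) t) (Ici (0:ℝ)) := by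
    intro s hs
    simp only [mem_Ici, sub_nonneg]
    exact hs.2
  have h2 : ContinuousWithinAt (fun s => S (t - s) (g s₀)) (Icc (0:ℝ) t) s₀ :=
    (((hS (g s₀)).comp ((continuous_const.sub continuous_id).continuousOn) hmap)) s₀ hs₀
  have h3 : Tendsto (fun s => S (t - s) (g s - g s₀)) (nhdsWithin s₀ (Icc (0:ℝ) t)) (nhds 0) := by
    apply squeeze_zero_norm' (a := fun s => B * ‖g s - g s₀‖)
    · filter_upwards [self_mem_nhdsWithin] with s hs
      calc ‖S (t - s) (g s - g s₀)‖ ≤ ‖S (t - s)‖ * ‖g s - g s₀‖ :=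
            (S (t - s)).le_opNorm _
        _ ≤ B * ‖g s - g s₀‖ := by
            refine mul_le_mul_of_nonneg_right (hB _ ⟨?_, ?_⟩) (norm_nonneg _)
            · linarith [hs.2]
            · linarith [hs.1]
    · have hc : Tendsto (fun s => B * ‖g s - g s₀‖) (nhds s₀) (nhds (B * ‖g s₀ - g s₀‖)) :=
        tendsto_const_nhds.mul (((hg.tendsto s₀).sub tendsto_const_nhds).norm)
      simpa using hc.mono_left nhdsWithin_le_nhds
  have heq : (fun s => S (t - s) (g s))
      = fun s => S (t - s) (g s - g s₀) + S (t - s) (g s₀) := by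
    funext s
    rw [← map_add]
    congr 1
    abel
  rw [heq]
  have := h3.add h2
  unfold ContinuousWithinAt
  simpa using this

/-- Convergence of Galerkin mild solutions: under the conclusion of the Trotter–Kato theorem
(strong convergence of the approximating semigroups `T_N ∘ Π_N` to `T`, locally uniformly in
time) and a global Lipschitz condition on `G`, the Galerkin mild solutions `u_N` converge to
the mild solution `u` uniformly on every bounded time interval `[0, T*]`. -/
theorem galerkin_mild_solutions_converge {X : Type*} [NormedAddCommGroup X]
    [InnerProductSpace ℝ X] [CompleteSpace X]
    (M ω : ℝ) (hM : 1 ≤ M) (hω : 0 ≤ ω)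
    (T : ℝ → X →L[ℝ] X)
    (hT0 : T 0 = ContinuousLinearMap.id ℝ X)
    (hTsemigroup : ∀ s t : ℝ, 0 ≤ s → 0 ≤ t → T (t + s) = (T t).comp (T s))
    (hTcont : ∀ x : X, ContinuousOn (fun t => T t x) (Ici 0))
    (hTbound : ∀ t : ℝ, 0 ≤ t → ‖T t‖ ≤ M * Real.exp (ω * t))
    (P : ℕ → X →L[ℝ] X) (hPbound : ∀ N : ℕ, ‖P N‖ ≤ 1)
    (hPlim : ∀ x : X, Tendsto (fun N => P N x) atTop (nhds x))
    (TN : ℕ → ℝ → X →L[ℝ] X)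
    (hTNcont : ∀ (N : ℕ) (x : X), ContinuousOn (fun t => TN N t x) (Ici 0))
    (hTNbound : ∀ (N : ℕ) (t : ℝ), 0 ≤ t → ‖TN N t‖ ≤ M * Real.exp (ω * t))
    (hTrotterKato : ∀ (φ : X) (Tstar : ℝ), 0 < Tstar →
      Tendsto (fun N => ⨆ t : Icc (0 : ℝ) Tstar, ‖TN N (t : ℝ) (P N φ) - T (t : ℝ) φ‖)
        atTop (nhds 0))
    (K : NNReal) (G : X → X) (hG : LipschitzWith K G)
    (u₀ : X) (u : ℝ → X) (hu_cont : Continuous u)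
    (hu : ∀ t : ℝ, 0 ≤ t → u t = T t u₀ + ∫ s in (0 : ℝ)..t, T (t - s) (G (u s)))
    (uN : ℕ → ℝ → X) (huN_cont : ∀ N : ℕ, Continuous (uN N))
    (huN : ∀ (N : ℕ) (t : ℝ), 0 ≤ t →
      uN N t = TN N t (P N u₀) + ∫ s in (0 : ℝ)..t, TN N (t - s) (P N (G (uN N s)))) :
    ∀ Tstar : ℝ, 0 < Tstar →
      Tendsto (fun N => ⨆ t : Icc (0 : ℝ) Tstar, ‖uN N (t : ℝ) - u (t : ℝ)‖)
        atTop (nhds 0) := by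
  intro Tstar hTs
  haveI : Nonempty (Icc (0:ℝ) Tstar) := ⟨⟨0, le_refl _, hTs.le⟩⟩
  set C0 : ℝ := M * Real.exp (ω * Tstar) with hC0
  have hC0pos : 0 < C0 := mul_pos (lt_of_lt_of_le one_pos hM) (Real.exp_pos _)
  -- uniform operator bounds on [0, Tstar]
  have hexp : ∀ r ∈ Icc (0:ℝ) Tstar, M * Real.exp (ω * r) ≤ C0 := by
    intro r hr
    have : Real.exp (ω * r) ≤ Real.exp (ω * Tstar) :=
      Real.exp_le_exp.2 (mul_le_mul_of_nonneg_left hr.2 hω)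
    have hM0 : (0:ℝ) ≤ M := by linarith
    exact mul_le_mul_of_nonneg_left this hM0
  have hTle : ∀ r ∈ Icc (0:ℝ) Tstar, ‖T r‖ ≤ C0 := fun r hr =>
    (hTbound r hr.1).trans (hexp r hr)
  have hTNle : ∀ N, ∀ r ∈ Icc (0:ℝ) Tstar, ‖TN N r‖ ≤ C0 := fun N r hr =>
    (hTNbound N r hr.1).trans (hexp r hr)
  -- the uniform-in-time defect functional F
  set F : ℕ → X → ℝ :=
    fun N φ => ⨆ t : Icc (0:ℝ) Tstar, ‖TN N (t : ℝ) (P N φ) - T (t : ℝ) φ‖ with hFdef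
  have hFlim : ∀ φ : X, Tendsto (fun N => F N φ) atTop (nhds 0) := by
    intro φ
    simp only [hFdef]
    exact hTrotterKato φ Tstar hTs
  have hFle : ∀ N (φ : X) (t : Icc (0:ℝ) Tstar),
      ‖TN N (t : ℝ) (P N φ) - T (t : ℝ) φ‖ ≤ 2 * C0 * ‖φ‖ := by
    intro N φ t
    have hPle : ‖P N φ‖ ≤ ‖φ‖ := by
      have := (P N).le_of_opNorm_le (hPbound N) φ
      simpa using this
    have h1 : ‖TN N (t : ℝ) (P N φ)‖ ≤ C0 * ‖φ‖ := by
      calc ‖TN N (t : ℝ) (P N φ)‖ ≤ ‖TN N (t : ℝ)‖ * ‖P N φ‖ := (TN N _).le_opNorm _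
        _ ≤ C0 * ‖φ‖ :=
            mul_le_mul (hTNle N _ t.2) hPle (norm_nonneg _) hC0pos.le
    have h2 : ‖T (t : ℝ) φ‖ ≤ C0 * ‖φ‖ :=
      (T (t : ℝ)).le_of_opNorm_le (hTle _ t.2) φ
    calc ‖TN N (t : ℝ) (P N φ) - T (t : ℝ) φ‖
        ≤ ‖TN N (t : ℝ) (P N φ)‖ + ‖T (t : ℝ) φ‖ := norm_sub_le _ _
      _ ≤ 2 * C0 * ‖φ‖ := by linarith
  have hFbdd : ∀ N (φ : X),
      BddAbove (range fun t : Icc (0:ℝ) Tstar => ‖TN N (t : ℝ) (P N φ) - T (t : ℝ) φ‖) := by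
    intro N φ
    refine ⟨2 * C0 * ‖φ‖, ?_⟩
    rintro x ⟨t, rfl⟩
    exact hFle N φ t
  have hFub : ∀ N (φ : X) (r : ℝ), r ∈ Icc (0:ℝ) Tstar →
      ‖TN N r (P N φ) - T r φ‖ ≤ F N φ := by
    intro N φ r hr
    exact le_ciSup (hFbdd N φ) (⟨r, hr⟩ : Icc (0:ℝ) Tstar)
  have hFsup : ∀ N (φ : X), F N φ ≤ 2 * C0 * ‖φ‖ := fun N φ => ciSup_le (hFle N φ)
  have hFnonneg : ∀ N (φ : X), 0 ≤ F N φ := fun N φ =>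
    Real.iSup_nonneg fun _ => norm_nonneg _
  have hFlip : ∀ N (φ ψ : X), F N φ ≤ F N ψ + 2 * C0 * ‖φ - ψ‖ := by
    intro N φ ψ
    apply ciSup_le
    intro t
    have key : TN N (t : ℝ) (P N φ) - T (t : ℝ) φ
        = (TN N (t : ℝ) (P N ψ) - T (t : ℝ) ψ)
          + (TN N (t : ℝ) (P N (φ - ψ)) - T (t : ℝ) (φ - ψ)) := by
      simp only [map_sub]
      abel
    rw [key]
    calc ‖(TN N (t : ℝ) (P N ψ) - T (t : ℝ) ψ)
          + (TN N (t : ℝ) (P N (φ - ψ)) - T (t : ℝ) (φ - ψ))‖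
        ≤ ‖TN N (t : ℝ) (P N ψ) - T (t : ℝ) ψ‖
          + ‖TN N (t : ℝ) (P N (φ - ψ)) - T (t : ℝ) (φ - ψ)‖ := norm_add_le _ _
      _ ≤ F N ψ + 2 * C0 * ‖φ - ψ‖ :=
          add_le_add (hFub N ψ (t : ℝ) t.2) (hFle N (φ - ψ) t)
  -- the uniform defect along the solution trajectory
  have hGu_cont : Continuous fun s => G (u s) := hG.continuous.comp hu_cont
  obtain ⟨Bg, hBg⟩ :=
    isCompact_Icc.exists_bound_of_continuousOn
      (hGu_cont.continuousOn : ContinuousOn (fun s => G (u s)) (Icc (0:ℝ) Tstar))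
  set β : ℕ → ℝ := fun N => ⨆ s : Icc (0:ℝ) Tstar, F N (G (u (s : ℝ))) with hβdef
  have hβbdd : ∀ N, BddAbove (range fun s : Icc (0:ℝ) Tstar => F N (G (u (s : ℝ)))) := by
    intro N
    refine ⟨2 * C0 * Bg, ?_⟩
    rintro x ⟨s, rfl⟩
    refine (hFsup N _).trans ?_
    have h2C0 : (0:ℝ) ≤ 2 * C0 := by linarith
    exact mul_le_mul_of_nonneg_left (hBg (s : ℝ) s.2) h2C0
  have hβub : ∀ N (s : ℝ), s ∈ Icc (0:ℝ) Tstar → F N (G (u s)) ≤ β N := by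
    intro N s hs
    exact le_ciSup (hβbdd N) (⟨s, hs⟩ : Icc (0:ℝ) Tstar)
  have hβnonneg : ∀ N, 0 ≤ β N := fun N => Real.iSup_nonneg fun s => hFnonneg N _
  -- β N → 0 via compactness and equi-Lipschitz continuity of F N
  have hβlim : Tendsto β atTop (nhds 0) := by
    rw [Metric.tendsto_atTop]
    intro ε hε
    set δ : ℝ := ε / (2 * (2 * C0 + 1)) with hδdef
    have hδpos : 0 < δ := by positivity
    have hKcpt : IsCompact ((fun s => G (u s)) '' Icc (0:ℝ) Tstar) :=
      isCompact_Icc.image hGu_cont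
    obtain ⟨c, hcsub, hcfin, hccov⟩ := hKcpt.finite_cover_balls hδpos
    have hev : ∀ᶠ N in atTop, ∀ x ∈ c, F N x < ε / 4 := by
      rw [Filter.eventually_all_finite hcfin]
      intro x _
      exact (hFlim x).eventually_lt_const (by positivity)
    obtain ⟨N₀, hN₀⟩ := hev.exists_forall_of_atTop
    refine ⟨N₀, fun N hN => ?_⟩
    have hβle : β N ≤ 3 * ε / 4 := by
      apply ciSup_le
      intro s
      have hmem : G (u (s : ℝ)) ∈ (fun s => G (u s)) '' Icc (0:ℝ) Tstar :=
        ⟨(s : ℝ), s.2, rfl⟩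
      obtain ⟨x, hx, hdx⟩ := by
        have := hccov hmem
        simpa only [mem_iUnion, Metric.mem_ball, exists_prop] using this
      have hlt : F N x < ε / 4 := hN₀ N hN x hx
      have hlip := hFlip N (G (u (s : ℝ))) x
      have hd : ‖G (u (s : ℝ)) - x‖ < δ := by
        rwa [← dist_eq_norm]
      have h2C0δ : 2 * C0 * ‖G (u (s : ℝ)) - x‖ ≤ ε / 2 := by
        have h1 : 2 * C0 * ‖G (u (s : ℝ)) - x‖ ≤ 2 * C0 * δ := by
          apply mul_le_mul_of_nonneg_left hd.le
          linarith
        have h2 : 2 * C0 * δ ≤ ε / 2 := by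
          rw [hδdef, ← mul_div_assoc]
          rw [div_le_div_iff₀ (by positivity) (by norm_num)]
          nlinarith [hε.le, hC0pos.le]
        linarith
      linarith
    rw [Real.dist_eq, sub_zero, abs_of_nonneg (hβnonneg N)]
    linarith
  -- the key Grönwall-type integral inequality
  set CK : ℝ := C0 * (K : ℝ) with hCKdef
  have hCK0 : 0 ≤ CK := mul_nonneg hC0pos.le K.coe_nonneg
  set C' : ℝ := CK + 1 with hC'def
  have hC'pos : 0 < C' := by positivity
  have he_cont : ∀ N, Continuous fun s => ‖uN N s - u s‖ := fun N =>
    ((huN_cont N).sub hu_cont).norm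
  have key : ∀ N, ∀ t ∈ Icc (0:ℝ) Tstar,
      ‖uN N t - u t‖ ≤ (F N u₀ + β N * Tstar) + C' * ∫ s in (0:ℝ)..t, ‖uN N s - u s‖ := by
    intro N t ht
    obtain ⟨ht0, htT⟩ := ht
    have hsubT : Icc (0:ℝ) t ⊆ Icc (0:ℝ) Tstar := Icc_subset_Icc le_rfl htT
    have hcont1 : ContinuousOn (fun s => TN N (t - s) (P N (G (uN N s)))) (Icc (0:ℝ) t) :=
      flow_contOn (TN N) C0 t (hTNcont N) (fun r hr => hTNle N r (hsubT hr))
        (fun s => P N (G (uN N s)))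
        ((P N).continuous.comp (hG.continuous.comp (huN_cont N)))
    have hcont2 : ContinuousOn (fun s => T (t - s) (G (u s))) (Icc (0:ℝ) t) :=
      flow_contOn T C0 t hTcont (fun r hr => hTle r (hsubT hr)) (fun s => G (u s)) hGu_cont
    have hI1 : IntervalIntegrable (fun s => TN N (t - s) (P N (G (uN N s)))) volume 0 t :=
      ContinuousOn.intervalIntegrable (by rwa [uIcc_of_le ht0])
    have hI2 : IntervalIntegrable (fun s => T (t - s) (G (u s))) volume 0 t :=
      ContinuousOn.intervalIntegrable (by rwa [uIcc_of_le ht0])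
    have hsplit : uN N t - u t = (TN N t (P N u₀) - T t u₀)
        + ∫ s in (0:ℝ)..t, (TN N (t - s) (P N (G (uN N s))) - T (t - s) (G (u s))) := by
      rw [huN N t ht0, hu t ht0, intervalIntegral.integral_sub hI1 hI2]
      abel
    have hpt : ∀ s ∈ Icc (0:ℝ) t,
        ‖TN N (t - s) (P N (G (uN N s))) - T (t - s) (G (u s))‖
          ≤ CK * ‖uN N s - u s‖ + β N := by
      intro s hs
      have hts : t - s ∈ Icc (0:ℝ) Tstar := ⟨by linarith [hs.2], by linarith [hs.1]⟩
      have hsT : s ∈ Icc (0:ℝ) Tstar := hsubT hs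
      have hdecomp : TN N (t - s) (P N (G (uN N s))) - T (t - s) (G (u s))
          = TN N (t - s) (P N (G (uN N s) - G (u s)))
            + (TN N (t - s) (P N (G (u s))) - T (t - s) (G (u s))) := by
        simp only [map_sub]
        abel
      rw [hdecomp]
      have h1 : ‖TN N (t - s) (P N (G (uN N s) - G (u s)))‖ ≤ CK * ‖uN N s - u s‖ := by
        have hGdiff : ‖G (uN N s) - G (u s)‖ ≤ (K : ℝ) * ‖uN N s - u s‖ := by
          have := hG.dist_le_mul (uN N s) (u s)
          rwa [dist_eq_norm, dist_eq_norm] at this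
        have hP : ‖P N (G (uN N s) - G (u s))‖ ≤ ‖G (uN N s) - G (u s)‖ := by
          have := (P N).le_of_opNorm_le (hPbound N) (G (uN N s) - G (u s))
          simpa using this
        calc ‖TN N (t - s) (P N (G (uN N s) - G (u s)))‖
            ≤ ‖TN N (t - s)‖ * ‖P N (G (uN N s) - G (u s))‖ := (TN N _).le_opNorm _
          _ ≤ C0 * ((K : ℝ) * ‖uN N s - u s‖) := by
              apply mul_le_mul (hTNle N _ hts) (hP.trans hGdiff) (norm_nonneg _) hC0pos.le
          _ = CK * ‖uN N s - u s‖ := by rw [hCKdef]; ring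
      have h2 : ‖TN N (t - s) (P N (G (u s))) - T (t - s) (G (u s))‖ ≤ β N :=
        (hFub N (G (u s)) (t - s) hts).trans (hβub N s hsT)
      calc ‖TN N (t - s) (P N (G (uN N s) - G (u s)))
            + (TN N (t - s) (P N (G (u s))) - T (t - s) (G (u s)))‖
          ≤ ‖TN N (t - s) (P N (G (uN N s) - G (u s)))‖
            + ‖TN N (t - s) (P N (G (u s))) - T (t - s) (G (u s))‖ := norm_add_le _ _
        _ ≤ CK * ‖uN N s - u s‖ + β N := add_le_add h1 h2
    have hnormint : ‖∫ s in (0:ℝ)..t, (TN N (t - s) (P N (G (uN N s))) - T (t - s) (G (u s)))‖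
        ≤ ∫ s in (0:ℝ)..t, (CK * ‖uN N s - u s‖ + β N) := by
      refine (intervalIntegral.norm_integral_le_integral_norm ht0).trans ?_
      refine intervalIntegral.integral_mono_on ht0 ?_ ?_ hpt
      · exact ContinuousOn.intervalIntegrable (by
          rw [uIcc_of_le ht0]; exact (hcont1.sub hcont2).norm)
      · exact ((continuous_const.mul (he_cont N)).add continuous_const).intervalIntegrable 0 t
    have hintsplit : ∫ s in (0:ℝ)..t, (CK * ‖uN N s - u s‖ + β N)
        = CK * (∫ s in (0:ℝ)..t, ‖uN N s - u s‖) + β N * t := by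
      rw [intervalIntegral.integral_add (by
          have h : IntervalIntegrable (fun s => CK * ‖uN N s - u s‖) volume 0 t :=
            (continuous_const.mul (he_cont N)).intervalIntegrable 0 t
          exact h)
        (intervalIntegrable_const), intervalIntegral.integral_const_mul,
        intervalIntegral.integral_const]
      simp [smul_eq_mul]
      ring
    have hIe : 0 ≤ ∫ s in (0:ℝ)..t, ‖uN N s - u s‖ :=
      intervalIntegral.integral_nonneg ht0 fun s _ => norm_nonneg _
    have hFu₀ : ‖TN N t (P N u₀) - T t u₀‖ ≤ F N u₀ := hFub N u₀ t ⟨ht0, htT⟩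
    have hβt : β N * t ≤ β N * Tstar := mul_le_mul_of_nonneg_left htT (hβnonneg N)
    calc ‖uN N t - u t‖
        ≤ ‖TN N t (P N u₀) - T t u₀‖
          + ‖∫ s in (0:ℝ)..t, (TN N (t - s) (P N (G (uN N s))) - T (t - s) (G (u s)))‖ := by
          rw [hsplit]; exact norm_add_le _ _
      _ ≤ F N u₀ + (CK * (∫ s in (0:ℝ)..t, ‖uN N s - u s‖) + β N * t) := by
          rw [← hintsplit]; exact add_le_add hFu₀ hnormint
      _ ≤ (F N u₀ + β N * Tstar) + C' * ∫ s in (0:ℝ)..t, ‖uN N s - u s‖ := by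
          rw [hC'def]
          nlinarith [hIe, hβt]
  -- Grönwall
  have key2 : ∀ N, ∀ t ∈ Icc (0:ℝ) Tstar,
      ‖uN N t - u t‖ ≤ (F N u₀ + β N * Tstar) * Real.exp (C' * Tstar) := by
    intro N t ht
    set a : ℝ := F N u₀ + β N * Tstar with hadef
    have ha0 : 0 ≤ a :=
      add_nonneg (hFnonneg N u₀) (mul_nonneg (hβnonneg N) hTs.le)
    set g : ℝ → ℝ := fun τ => ∫ s in (0:ℝ)..τ, ‖uN N s - u s‖ with hgdef
    have hder : ∀ τ : ℝ, HasDerivAt g (‖uN N τ - u τ‖) τ := fun τ =>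
      intervalIntegral.integral_hasDerivAt_right ((he_cont N).intervalIntegrable 0 τ)
        ((he_cont N).stronglyMeasurableAtFilter volume (nhds τ)) (he_cont N).continuousAt
    have hg0 : ∀ τ : ℝ, 0 ≤ τ → 0 ≤ g τ := fun τ hτ =>
      intervalIntegral.integral_nonneg hτ fun s _ => norm_nonneg _
    have hgb := norm_le_gronwallBound_of_norm_deriv_right_le
      (f := g) (f' := fun τ => ‖uN N τ - u τ‖) (δ := 0) (K := C') (ε := a)
      (a := 0) (b := Tstar)
      (fun τ _ => (hder τ).continuousAt.continuousWithinAt)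
      (fun τ _ => (hder τ).hasDerivWithinAt)
      (by simp [hgdef])
      (by
        intro τ hτ
        have hk : ‖uN N τ - u τ‖ ≤ a + C' * g τ := key N τ ⟨hτ.1, hτ.2.le⟩
        rw [Real.norm_of_nonneg (norm_nonneg _), Real.norm_of_nonneg (hg0 τ hτ.1)]
        linarith)
    have hgt := hgb t ht
    rw [Real.norm_of_nonneg (hg0 t ht.1), sub_zero,
      gronwallBound_of_K_ne_0 hC'pos.ne'] at hgt
    have hk : ‖uN N t - u t‖ ≤ a + C' * g t := key N t ht
    have hgle : g t ≤ a / C' * (Real.exp (C' * t) - 1) := by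
      simpa using hgt
    have hstep : ‖uN N t - u t‖ ≤ a * Real.exp (C' * t) := by
      have h1 : C' * g t ≤ C' * (a / C' * (Real.exp (C' * t) - 1)) :=
        mul_le_mul_of_nonneg_left hgle hC'pos.le
      have h2 : C' * (a / C' * (Real.exp (C' * t) - 1)) = a * (Real.exp (C' * t) - 1) := by
        field_simp
      rw [h2] at h1
      have := hk.trans (by linarith : a + C' * g t ≤ a + a * (Real.exp (C' * t) - 1))
      calc ‖uN N t - u t‖ ≤ a + a * (Real.exp (C' * t) - 1) := this
        _ = a * Real.exp (C' * t) := by ring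
    refine hstep.trans ?_
    have : Real.exp (C' * t) ≤ Real.exp (C' * Tstar) :=
      Real.exp_le_exp.2 (mul_le_mul_of_nonneg_left ht.2 hC'pos.le)
    exact mul_le_mul_of_nonneg_left this ha0
  -- conclude by squeezing
  have htend : Tendsto (fun N => (F N u₀ + β N * Tstar) * Real.exp (C' * Tstar))
      atTop (nhds 0) := by
    have := ((hFlim u₀).add (hβlim.mul_const Tstar)).mul_const (Real.exp (C' * Tstar))
    simpa using this
  refine squeeze_zero (fun N => Real.iSup_nonneg fun t => norm_nonneg _)
    (fun N => ciSup_le fun t => key2 N (t : ℝ) t.2) htend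
end
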